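/- arXiv:1303.2304 — 4 statements merged into one kernel-verified Lean document; each statement's English description precedes it below -/
import Mathlib

section
/- Let C be a cycle graph drawn with vertices on a circle, and let e₁, e₂, e₃ be three chords (edges joining distinct non-adjacent vertices of the cycle) whose endpoint pairs pairwise interleave around the cycle, with all six endpoints distinct. Then the graph obtained from C by adding e₁, e₂, e₃ contains a subdivision of K_{3,3}. -/
open SimpleGraph
open scoped Fin.NatCast Fin.CommRing

/-- A subdivision of `H` inside `G`: injective branch vertices together with
paths realizing the edges of `H`, pairwise internally disjoint and internally
avoiding all branch vertices. -/
structure Subdiv {α β : Type*} (H : SimpleGraph α) (G : SimpleGraph β) where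
  f : α → β
  inj : Function.Injective f
  path : ∀ ⦃u v⦄, H.Adj u v → G.Walk (f u) (f v)
  isPath : ∀ ⦃u v⦄ (h : H.Adj u v), (path h).IsPath
  rev : ∀ ⦃u v⦄ (h : H.Adj u v), path h.symm = (path h).reverse
  disj : ∀ ⦃u v u' v'⦄ (h : H.Adj u v) (h' : H.Adj u' v'), s(u, v) ≠ s(u', v') →
    ∀ x, x ∈ (path h).support → x ∈ (path h').support →
      (x = f u ∨ x = f v) ∧ (x = f u' ∨ x = f v')
  branch : ∀ ⦃u v⦄ (h : H.Adj u v) (w : α), f w ∈ (path h).support → w = u ∨ w = v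


private lemma mod_cases {m a : ℕ} (hm : 0 < m) (h : a < 2*m) :
    a % m = if a < m then a else a - m := by
  split
  · exact Nat.mod_eq_of_lt ‹_›
  · rw [Nat.mod_eq_sub_mod (by omega), Nat.mod_eq_of_lt (by omega)]

/-- Walk along the cycle from `x` taking `k` forward steps. -/
private def cwalk {n : ℕ} (x : Fin (n+2)) : (k : ℕ) → (cycleGraph (n+2)).Walk x (x + (k : Fin (n+2)))
  | 0 => Walk.nil.copy rfl (by simp)
  | k+1 => ((cwalk x k).concat
      (show (cycleGraph (n+2)).Adj (x + (k : Fin (n+2))) (x + (k : Fin (n+2)) + 1) from by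
        rw [cycleGraph_adj]; right; ring)).copy rfl
      (by rw [Nat.cast_add, Nat.cast_one]; ring)

private lemma support_cwalk {n : ℕ} (x : Fin (n+2)) (k : ℕ) :
    (cwalk x k).support = (List.range (k+1)).map (fun i : ℕ => x + (i : Fin (n+2))) := by
  induction k with
  | zero => simp [cwalk, List.range_succ]
  | succ k ih =>
      rw [cwalk, Walk.support_copy, Walk.support_concat, ih]
      simp only [List.range_succ, List.map_append]
      simp [Nat.cast_add, add_assoc]

private lemma val_add_cast {n : ℕ} (x : Fin (n+2)) (i : ℕ) (hi : i < n+2) :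
    (x + (i : Fin (n+2))).val = (x.val + i) % (n+2) := by
  rw [Fin.val_add, Fin.val_natCast, Nat.mod_eq_of_lt hi]

private lemma mem_support_cwalk_lt {n : ℕ} (x : Fin (n+2)) (k : ℕ) (hk : x.val + k < n+2)
    (y : Fin (n+2)) :
    y ∈ (cwalk x k).support ↔ x.val ≤ y.val ∧ y.val ≤ x.val + k := by
  simp only [support_cwalk, List.mem_map, List.mem_range, Nat.lt_succ_iff]
  constructor
  · rintro ⟨i, hik, rfl⟩
    rw [val_add_cast _ _ (by omega), Nat.mod_eq_of_lt (by omega)]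
    omega
  · rintro ⟨h1, h2⟩
    refine ⟨y.val - x.val, by omega, Fin.ext ?_⟩
    rw [val_add_cast _ _ (by omega), Nat.mod_eq_of_lt (by omega)]
    omega

private lemma mem_support_cwalk_wrap {n : ℕ} (x : Fin (n+2)) (k : ℕ) (hk1 : n+2 ≤ x.val + k)
    (hk2 : k < n+2) (y : Fin (n+2)) :
    y ∈ (cwalk x k).support ↔ x.val ≤ y.val ∨ y.val ≤ x.val + k - (n+2) := by
  have hx := x.isLt
  have hy := y.isLt
  simp only [support_cwalk, List.mem_map, List.mem_range, Nat.lt_succ_iff]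
  constructor
  · rintro ⟨i, hik, rfl⟩
    rw [val_add_cast _ _ (by omega), mod_cases (by omega) (by omega)]
    split <;> omega
  · rintro (h1 | h1)
    · refine ⟨y.val - x.val, by omega, Fin.ext ?_⟩
      rw [val_add_cast _ _ (by omega), Nat.mod_eq_of_lt (by omega)]
      omega
    · by_cases hxy : x.val ≤ y.val
      · refine ⟨y.val - x.val, by omega, Fin.ext ?_⟩
        rw [val_add_cast _ _ (by omega), Nat.mod_eq_of_lt (by omega)]
        omega
      · refine ⟨y.val + (n+2) - x.val, by omega, Fin.ext ?_⟩
        rw [val_add_cast _ _ (by omega), mod_cases (by omega) (by omega)]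
        split <;> omega

private lemma isPath_cwalk {n : ℕ} (x : Fin (n+2)) (k : ℕ) (hk : k < n+2) :
    (cwalk x k).IsPath := by
  rw [Walk.isPath_def, support_cwalk]
  refine List.Nodup.map_on ?_ List.nodup_range
  intro i hi j hj hij
  simp only [List.mem_range, Nat.lt_succ_iff] at hi hj
  have h := congrArg Fin.val hij
  rw [val_add_cast _ _ (by omega), val_add_cast _ _ (by omega),
    mod_cases (by omega) (by omega), mod_cases (by omega) (by omega)] at h
  have hx := x.isLt
  split_ifs at h <;> omega

private lemma support_mapLe {V : Type*} {G G' : SimpleGraph V} (h : G ≤ G') {u v : V}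
    (p : G.Walk u v) : (p.mapLe h).support = p.support := by
  rw [Walk.mapLe, Walk.support_map]
  exact List.map_id _

private lemma isPath_mapLe {V : Type*} {G G' : SimpleGraph V} (h : G ≤ G') {u v : V}
    {p : G.Walk u v} (hp : p.IsPath) : (p.mapLe h).IsPath := by
  rw [Walk.isPath_def, support_mapLe]
  exact hp.support_nodup
/-- All data needed for the K33 construction: six cycle positions in increasing
order, chords `p0p3, p1p4, p2p5` present in `G`, and the cycle contained in `G`. -/
private structure Cfg (n : ℕ) (G : SimpleGraph (Fin (n+2))) where
  hG : cycleGraph (n+2) ≤ G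
  p0 : Fin (n+2)
  p1 : Fin (n+2)
  p2 : Fin (n+2)
  p3 : Fin (n+2)
  p4 : Fin (n+2)
  p5 : Fin (n+2)
  h01 : p0.val < p1.val
  h12 : p1.val < p2.val
  h23 : p2.val < p3.val
  h34 : p3.val < p4.val
  h45 : p4.val < p5.val
  c0 : G.Adj p0 p3
  c1 : G.Adj p1 p4
  c2 : G.Adj p2 p5

namespace Cfg
variable {n : ℕ} {G : SimpleGraph (Fin (n+2))} (C : Cfg n G)

/-- An arc of the cycle from `u` forward to `v` (no wrap-around). -/
private def arc (u v : Fin (n+2)) (h : u.val ≤ v.val) : G.Walk u v :=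
  ((cwalk u (v.val - u.val)).copy rfl (by
    refine Fin.ext ?_
    rw [val_add_cast _ _ (by omega), Nat.mod_eq_of_lt (by omega)]
    omega)).mapLe C.hG

private lemma mem_arc (u v : Fin (n+2)) (h : u.val ≤ v.val) (y : Fin (n+2)) :
    y ∈ (C.arc u v h).support ↔ u.val ≤ y.val ∧ y.val ≤ v.val := by
  rw [arc, support_mapLe, Walk.support_copy,
    mem_support_cwalk_lt _ _ (by have := v.isLt; omega)]
  have := v.isLt
  constructor <;> intro <;> omega

private lemma isPath_arc (u v : Fin (n+2)) (h : u.val ≤ v.val) : (C.arc u v h).IsPath := by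
  refine isPath_mapLe _ ?_
  rw [Walk.isPath_copy]
  exact isPath_cwalk _ _ (by have := v.isLt; omega)

/-- The wrap-around arc of the cycle from `p5` through `n+1, 0` to `p0`. -/
private def wrap : G.Walk C.p5 C.p0 :=
  ((cwalk C.p5 (n+2 - C.p5.val + C.p0.val)).copy rfl (by
    have h5 := C.p5.isLt
    have h05 : C.p0.val < C.p5.val := by
      have := C.h01; have := C.h12; have := C.h23; have := C.h34; have := C.h45; omega
    refine Fin.ext ?_
    rw [val_add_cast _ _ (by omega),
      show C.p5.val + (n+2 - C.p5.val + C.p0.val) = C.p0.val + (n+2) by omega,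
      Nat.add_mod_right, Nat.mod_eq_of_lt C.p0.isLt])).mapLe C.hG

private lemma p05 : C.p0.val < C.p5.val := by
  have := C.h01; have := C.h12; have := C.h23; have := C.h34; have := C.h45; omega

private lemma mem_wrap (y : Fin (n+2)) :
    y ∈ C.wrap.support ↔ C.p5.val ≤ y.val ∨ y.val ≤ C.p0.val := by
  have h5 := C.p5.isLt
  have h05 := C.p05
  rw [wrap, support_mapLe, Walk.support_copy,
    mem_support_cwalk_wrap _ _ (by omega) (by omega)]
  constructor <;> intro <;> omega

private lemma isPath_wrap : C.wrap.IsPath := by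
  have h5 := C.p5.isLt
  have h05 := C.p05
  refine isPath_mapLe _ ?_
  rw [Walk.isPath_copy]
  exact isPath_cwalk _ _ (by omega)

/-- Branch vertices: left part. -/
private def L : Fin 3 → Fin (n+2)
  | ⟨0, _⟩ => C.p0
  | ⟨1, _⟩ => C.p2
  | ⟨2, _⟩ => C.p4

/-- Branch vertices: right part. -/
private def R : Fin 3 → Fin (n+2)
  | ⟨0, _⟩ => C.p1
  | ⟨1, _⟩ => C.p3
  | ⟨2, _⟩ => C.p5

/-- The nine connecting paths. -/
private def P : (i j : Fin 3) → G.Walk (C.L i) (C.R j)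
  | ⟨0, _⟩, ⟨0, _⟩ => C.arc C.p0 C.p1 C.h01.le
  | ⟨0, _⟩, ⟨1, _⟩ => Walk.cons C.c0 Walk.nil
  | ⟨0, _⟩, ⟨2, _⟩ => C.wrap.reverse
  | ⟨1, _⟩, ⟨0, _⟩ => (C.arc C.p1 C.p2 C.h12.le).reverse
  | ⟨1, _⟩, ⟨1, _⟩ => C.arc C.p2 C.p3 C.h23.le
  | ⟨1, _⟩, ⟨2, _⟩ => Walk.cons C.c2 Walk.nil
  | ⟨2, _⟩, ⟨0, _⟩ => (Walk.cons C.c1 Walk.nil).reverse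
  | ⟨2, _⟩, ⟨1, _⟩ => (C.arc C.p3 C.p4 C.h34.le).reverse
  | ⟨2, _⟩, ⟨2, _⟩ => C.arc C.p4 C.p5 C.h45.le

private lemma isPath_P (i j : Fin 3) : (C.P i j).IsPath := by
  have hsingle : ∀ (u v : Fin (n+2)) (h : G.Adj u v), (Walk.cons h Walk.nil).IsPath := by
    intro u v h
    simp [Walk.isPath_def, h.ne]
  fin_cases i <;> fin_cases j <;> simp only [Cfg.P] <;>
    first
      | exact C.isPath_arc _ _ _
      | exact hsingle _ _ _
      | exact (C.isPath_arc _ _ _).reverse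
      | exact (hsingle _ _ _).reverse
      | exact C.isPath_wrap.reverse

end Cfg
namespace Cfg
variable {n : ℕ} {G : SimpleGraph (Fin (n+2))} (C : Cfg n G)

private lemma core (i j i' j' : Fin 3) (hne : (i, j) ≠ (i', j')) (x : Fin (n+2))
    (hx : x ∈ (C.P i j).support) (hx' : x ∈ (C.P i' j').support) :
    (x = C.L i ∨ x = C.R j) ∧ (x = C.L i' ∨ x = C.R j') := by
  have h01 := C.h01; have h12 := C.h12; have h23 := C.h23
  have h34 := C.h34; have h45 := C.h45
  have e0 := C.p0.isLt; have e5 := C.p5.isLt; have ex := x.isLt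
  fin_cases i <;> fin_cases j <;> fin_cases i' <;> fin_cases j' <;>
    simp_all only [P, L, R, mem_arc, mem_wrap, Walk.support_reverse, List.mem_reverse,
      Walk.support_cons, Walk.support_nil, List.mem_cons, List.mem_singleton,
      List.not_mem_nil, or_false, Fin.ext_iff, ne_eq, Prod.mk.injEq, Fin.mk.injEq,
      not_and, Fin.isValue, and_true, true_and, or_true, true_or, and_self] <;>
    omega

end Cfg
namespace Cfg
variable {n : ℕ} {G : SimpleGraph (Fin (n+2))} (C : Cfg n G)

private lemma coreBranch (i j : Fin 3) (w : Fin 3 ⊕ Fin 3)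
    (hw : Sum.elim C.L C.R w ∈ (C.P i j).support) : w = Sum.inl i ∨ w = Sum.inr j := by
  have h01 := C.h01; have h12 := C.h12; have h23 := C.h23
  have h34 := C.h34; have h45 := C.h45
  have e0 := C.p0.isLt; have e1 := C.p1.isLt; have e2 := C.p2.isLt
  have e3 := C.p3.isLt; have e4 := C.p4.isLt; have e5 := C.p5.isLt
  rcases w with m|m <;> fin_cases i <;> fin_cases j <;> fin_cases m <;>
    simp_all only [Sum.elim_inl, Sum.elim_inr, P, L, R, mem_arc, mem_wrap,
      Walk.support_reverse, List.mem_reverse, Walk.support_cons, Walk.support_nil,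
      List.mem_cons, List.mem_singleton, List.not_mem_nil, or_false, false_or,
      Fin.ext_iff, Sum.inl.injEq, Sum.inr.injEq, Fin.mk.injEq, reduceCtorEq,
      and_true, true_and, or_true, true_or, and_self, Fin.isValue] <;>
    omega

/-- The path function of the subdivision. -/
private def pathFn : ∀ ⦃u v : Fin 3 ⊕ Fin 3⦄,
    (completeBipartiteGraph (Fin 3) (Fin 3)).Adj u v →
    G.Walk (Sum.elim C.L C.R u) (Sum.elim C.L C.R v)
  | Sum.inl i, Sum.inr j, _ => C.P i j
  | Sum.inr j, Sum.inl i, _ => (C.P i j).reverse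
  | Sum.inl _, Sum.inl _, h => absurd h (by simp)
  | Sum.inr _, Sum.inr _, h => absurd h (by simp)

private lemma key (C : Cfg n G) : Nonempty (Subdiv (completeBipartiteGraph (Fin 3) (Fin 3)) G) := by
  refine ⟨⟨Sum.elim C.L C.R, ?_, C.pathFn, ?_, ?_, ?_, ?_⟩⟩
  · -- injectivity
    have h01 := C.h01; have h12 := C.h12; have h23 := C.h23
    have h34 := C.h34; have h45 := C.h45
    intro u v huv
    rcases u with m|m <;> rcases v with m'|m' <;> fin_cases m <;> fin_cases m' <;>
      simp_all only [Sum.elim_inl, Sum.elim_inr, L, R, Fin.ext_iff, Sum.inl.injEq,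
        Sum.inr.injEq, Fin.mk.injEq, reduceCtorEq, Fin.isValue] <;>
      omega
  · -- paths
    intro u v h
    rcases u with i|i <;> rcases v with j|j
    · exact absurd h (by simp)
    · exact C.isPath_P i j
    · exact (C.isPath_P j i).reverse
    · exact absurd h (by simp)
  · -- reverse
    intro u v h
    rcases u with i|i <;> rcases v with j|j
    · exact absurd h (by simp)
    · rfl
    · exact (Walk.reverse_reverse _).symm
    · exact absurd h (by simp)
  · -- internal disjointness
    intro u v u' v' h h' hne x hx hx'
    have notLL : ∀ (i j : Fin 3), ¬ (completeBipartiteGraph (Fin 3) (Fin 3)).Adj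
        (Sum.inl i) (Sum.inl j) := by simp
    have notRR : ∀ (i j : Fin 3), ¬ (completeBipartiteGraph (Fin 3) (Fin 3)).Adj
        (Sum.inr i) (Sum.inr j) := by simp
    rcases u with i|i <;> rcases v with j|j <;> rcases u' with i'|i' <;> rcases v' with j'|j' <;>
      first
        | exact absurd h (notLL _ _)
        | exact absurd h' (notLL _ _)
        | exact absurd h (notRR _ _)
        | exact absurd h' (notRR _ _)
        | skip
    · -- both forward
      have hne' : (i, j) ≠ (i', j') := by
        intro he
        rw [Prod.mk.injEq] at he
        exact hne (by rw [he.1, he.2])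
      exact C.core i j i' j' hne' x hx hx'
    · -- second reversed
      have hx'' : x ∈ (C.P j' i').support := by
        change x ∈ (C.P j' i').reverse.support at hx'
        rw [Walk.support_reverse,
          List.mem_reverse] at hx'
        exact hx'
      have hne' : (i, j) ≠ (j', i') := by
        intro he
        rw [Prod.mk.injEq] at he
        exact hne (by rw [he.1, he.2]; exact (Sym2.eq_swap).symm)
      exact ⟨(C.core i j j' i' hne' x hx hx'').1, ((C.core i j j' i' hne' x hx hx'').2).symm⟩
    · -- first reversed
      have hx'' : x ∈ (C.P j i).support := by
        change x ∈ (C.P j i).reverse.support at hx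
        rw [Walk.support_reverse,
          List.mem_reverse] at hx
        exact hx
      have hne' : (j, i) ≠ (i', j') := by
        intro he
        rw [Prod.mk.injEq] at he
        exact hne (by rw [he.1, he.2]; exact Sym2.eq_swap)
      exact ⟨((C.core j i i' j' hne' x hx'' hx').1).symm, (C.core j i i' j' hne' x hx'' hx').2⟩
    · -- both reversed
      have hx1 : x ∈ (C.P j i).support := by
        change x ∈ (C.P j i).reverse.support at hx
        rw [Walk.support_reverse,
          List.mem_reverse] at hx
        exact hx
      have hx2 : x ∈ (C.P j' i').support := by
        change x ∈ (C.P j' i').reverse.support at hx'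
        rw [Walk.support_reverse,
          List.mem_reverse] at hx'
        exact hx'
      have hne' : (j, i) ≠ (j', i') := by
        intro he
        rw [Prod.mk.injEq] at he
        exact hne (by rw [he.1, he.2])
      exact ⟨((C.core j i j' i' hne' x hx1 hx2).1).symm, ((C.core j i j' i' hne' x hx1 hx2).2).symm⟩
  · -- branch vertices
    intro u v h w hw
    rcases u with i|i <;> rcases v with j|j
    · exact absurd h (by simp)
    · exact C.coreBranch i j w hw
    · have hw' : Sum.elim C.L C.R w ∈ (C.P j i).support := by
        change Sum.elim C.L C.R w ∈ (C.P j i).reverse.support at hw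
        rw [Walk.support_reverse,
          List.mem_reverse] at hw
        exact hw
      exact (C.coreBranch j i w hw').symm
    · exact absurd h (by simp)

end Cfg

/-- if three chords of a cycle graph (edges joining distinct non-adjacent
cycle vertices, all six endpoints distinct) pairwise interleave around the cycle, then
the cycle together with the three chords contains a subdivision of `K_{3,3}`.
Writing each chord as `{a i, b i}` with `a i < b i`, two chords `{a,b}` and `{c,d}`
interleave in the cyclic order iff `a < c < b < d` or `c < a < d < b`. -/
theorem cycle_three_interleaving_chords_k33 {n : ℕ} (a b : Fin 3 → Fin n)
    (hab : ∀ i, a i < b i)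
    (hnadj : ∀ i, ¬ (cycleGraph n).Adj (a i) (b i))
    (hdistinct : ∀ i j, i ≠ j → a i ≠ a j ∧ a i ≠ b j ∧ b i ≠ a j ∧ b i ≠ b j)
    (hinterleave : ∀ i j, i ≠ j →
      (a i < a j ∧ a j < b i ∧ b i < b j) ∨ (a j < a i ∧ a i < b j ∧ b j < b i)) :
    Nonempty (Subdiv (completeBipartiteGraph (Fin 3) (Fin 3))
      (cycleGraph n ⊔ SimpleGraph.fromEdgeSet {e | ∃ i, e = s(a i, b i)})) := by
  obtain ⟨m, rfl⟩ : ∃ m, n = m + 2 := by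
    have h0 : (a 0).val < (b 0).val := hab 0
    have h1 := (b 0).isLt
    exact ⟨n - 2, by omega⟩
  have hc : ∀ i, (cycleGraph (m+2) ⊔
      SimpleGraph.fromEdgeSet {e | ∃ i, e = s(a i, b i)}).Adj (a i) (b i) := by
    intro i
    rw [SimpleGraph.sup_adj]
    right
    rw [SimpleGraph.fromEdgeSet_adj]
    exact ⟨⟨i, rfl⟩, (hab i).ne⟩
  have H01 := hinterleave 0 1 (by decide)
  have H02 := hinterleave 0 2 (by decide)
  have H12 := hinterleave 1 2 (by decide)
  simp only [Fin.lt_def] at H01 H02 H12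
  rcases H01 with ⟨u1, u2, u3⟩ | ⟨u1, u2, u3⟩ <;>
    rcases H02 with ⟨v1, v2, v3⟩ | ⟨v1, v2, v3⟩ <;>
    rcases H12 with ⟨w1, w2, w3⟩ | ⟨w1, w2, w3⟩
  · exact Cfg.key ⟨le_sup_left, a 0, a 1, a 2, b 0, b 1, b 2,
      u1, w1, v2, u3, w3, hc 0, hc 1, hc 2⟩
  · exact Cfg.key ⟨le_sup_left, a 0, a 2, a 1, b 0, b 2, b 1,
      v1, w1, u2, v3, w3, hc 0, hc 2, hc 1⟩
  · omega
  · exact Cfg.key ⟨le_sup_left, a 2, a 0, a 1, b 2, b 0, b 1,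
      v1, u1, w2, v3, u3, hc 2, hc 0, hc 1⟩
  · exact Cfg.key ⟨le_sup_left, a 1, a 0, a 2, b 1, b 0, b 2,
      u1, v1, w2, u3, v3, hc 1, hc 0, hc 2⟩
  · omega
  · exact Cfg.key ⟨le_sup_left, a 1, a 2, a 0, b 1, b 2, b 0,
      w1, v1, u2, w3, v3, hc 1, hc 2, hc 0⟩
  · exact Cfg.key ⟨le_sup_left, a 2, a 1, a 0, b 2, b 1, b 0,
      w1, u1, v2, w3, u3, hc 2, hc 1, hc 0⟩
end

section
/- Let G be a connected graph with a spanning tree T such that every component of G − E(T) has an even number of edges except possibly one component with one edge of odd parity matching β(G) mod 2 (i.e., ξ(G,T) ≤ 1). If G' is obtained from G by attaching a copy of H₃ at three distinct vertices of G, then G' has a spanning tree T' with ξ(G',T') = ξ(G,T). -/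
open SimpleGraph

/-- The Xuong deficiency of a spanning tree `T` of `H`: the number of connected
components of the co-tree graph `H \ T` containing an odd number of edges. -/
noncomputable def xi {V : Type*} (H T : SimpleGraph V) : ℕ :=
  Nat.card {c : (H \ T).ConnectedComponent //
    Odd (Nat.card {e : Sym2 V // e ∈ (H \ T).edgeSet ∧
      ∀ v ∈ e, (H \ T).connectedComponentMk v = c})}

/-- The graph obtained from `G` by attaching a copy of `H₃`, identifying its three
free nodes with the vertices `x`, `y`, `z` of `G`.  The five new vertices are the
two vertices `0`, `1` of the size-2 part of `K_{2,3}` and the three vertices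
`2`, `3`, `4` of the size-3 part; the free edges join `2,3,4` to `x,y,z`. -/
def attachH₃ {V : Type*} (G : SimpleGraph V) (x y z : V) : SimpleGraph (V ⊕ Fin 5) :=
  G.map Function.Embedding.inl ⊔ SimpleGraph.fromEdgeSet
    {s(Sum.inr 0, Sum.inr 2), s(Sum.inr 0, Sum.inr 3), s(Sum.inr 0, Sum.inr 4),
     s(Sum.inr 1, Sum.inr 2), s(Sum.inr 1, Sum.inr 3), s(Sum.inr 1, Sum.inr 4),
     s(Sum.inr 2, Sum.inl x), s(Sum.inr 3, Sum.inl y), s(Sum.inr 4, Sum.inl z)}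

namespace AttachH3Aux

/-! ### Generic helpers -/

section Generic

variable {W W' : Type*} {β : Sort*} {A : SimpleGraph W}

lemma walk_const (f : W → β) (hf : ∀ a b, A.Adj a b → f a = f b) :
    ∀ {v w : W}, A.Walk v w → f v = f w := by
  intro v w p
  induction p with
  | nil => rfl
  | cons h _ ih => exact (hf _ _ h).trans ih

/-- Lift an adjacency-invariant function to connected components. -/
def ccLift (f : W → β) (hf : ∀ a b, A.Adj a b → f a = f b) : A.ConnectedComponent → β :=
  ConnectedComponent.lift f fun _ _ p _ => walk_const f hf p

@[simp] lemma ccLift_mk (f : W → β) (hf : ∀ a b, A.Adj a b → f a = f b) (v : W) :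
    ccLift f hf (A.connectedComponentMk v) = f v := rfl

/-- No cycle passes through a vertex all of whose neighbours (in the support of the
cycle) are equal to a single vertex `w`. -/
lemma no_cycle_unique_nbr {v w : W} {c : A.Walk v v} (hc : c.IsCycle)
    (hv : ∀ u ∈ c.support, A.Adj v u → u = w) : False := by
  cases c with
  | nil => exact hc.ne_nil rfl
  | cons h p =>
    rename_i b
    have hb : b = w := by
      refine hv b ?_ h
      simp [Walk.support_cons]
    rw [Walk.cons_isCycle_iff] at hc
    obtain ⟨w', h2, q, hq⟩ := Walk.exists_eq_cons_of_ne h.ne p.reverse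
    have hw' : w' = w := by
      refine hv w' ?_ h2
      have : w' ∈ p.reverse.support := by rw [hq]; simp [Walk.support_cons, Walk.start_mem_support]
      rw [Walk.support_reverse, List.mem_reverse] at this
      simp [Walk.support_cons, this]
    have : s(v, w') ∈ p.reverse.edges := by rw [hq]; simp
    rw [Walk.edges_reverse, List.mem_reverse] at this
    obtain rfl : w' = b := hw'.trans hb.symm
    exact hc.2 this

/-- The canonical homomorphism from `A` to `A.map f`. -/
def mapHom (A : SimpleGraph W) (f : W ↪ W') : A →g A.map f :=
  ⟨f.toFun, fun h => (SimpleGraph.map_adj f A _ _).2 ⟨_, _, h, rfl, rfl⟩⟩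

lemma walk_back (f : W ↪ W') {a b : W'} (p : (A.map f).Walk a b) :
    ∀ (a' b' : W) (ha : a = f a') (hb : b = f b'),
      ∃ q : A.Walk a' b', p.copy ha hb = q.map (mapHom A f) := by
  induction p with
  | nil =>
    intro a' b' ha hb
    obtain rfl : a' = b' := f.injective (ha.symm.trans hb)
    exact ⟨Walk.nil, by subst ha; rfl⟩
  | @cons u c bb h p ih =>
    intro a' b' ha hb
    subst ha
    obtain ⟨u', v', hadj, hu, hv⟩ := (SimpleGraph.map_adj f A _ _).1 h
    obtain rfl : u' = a' := f.injective hu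
    obtain ⟨q, hq⟩ := ih v' b' hv.symm hb
    refine ⟨Walk.cons hadj q, ?_⟩
    subst hv hb
    rw [Walk.copy_rfl_rfl] at hq ⊢
    rw [Walk.map_cons, ← hq]
    rfl

lemma map_isAcyclic (f : W ↪ W') (hA : A.IsAcyclic) : (A.map f).IsAcyclic := by
  intro a c hc
  cases c with
  | nil => exact hc.ne_nil rfl
  | cons h p =>
    rename_i b
    obtain ⟨u', v', hadj, hu, hv⟩ := (SimpleGraph.map_adj f A _ _).1 h
    subst hu
    obtain ⟨q, hq⟩ := walk_back f (Walk.cons h p) u' u' rfl rfl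
    rw [Walk.copy_rfl_rfl] at hq
    rw [hq] at hc
    exact hA q ((Walk.map_isCycle_iff_of_injective (by exact f.injective)).1 hc)

lemma mem_support_rotate [DecidableEq W] {u v w : W} {c : A.Walk v v} (h : u ∈ c.support)
    (hw : w ∈ (c.rotate u h).support) : w ∈ c.support := by
  rw [Walk.support_eq_cons] at hw
  rcases List.mem_cons.1 hw with rfl | hw
  · exact h
  · have := (Walk.support_rotate c u h).mem_iff.1 hw
    rw [Walk.support_eq_cons c]
    exact List.mem_cons_of_mem _ this

end Generic

end AttachH3Aux

namespace AttachH3Aux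

section Main

variable {V : Type*} (G T : SimpleGraph V) (x y z : V)

/-- The spanning tree of the enlarged graph. -/
def newT (T : SimpleGraph V) (x y z : V) : SimpleGraph (V ⊕ Fin 5) :=
  T.map Function.Embedding.inl ⊔ SimpleGraph.fromEdgeSet
    {s(Sum.inr 0, Sum.inr 2), s(Sum.inr 1, Sum.inr 2),
     s(Sum.inr 2, Sum.inl x), s(Sum.inr 3, Sum.inl y), s(Sum.inr 4, Sum.inl z)}

/-- The four co-tree edges of the attached `H₃`. -/
def Cset (V : Type*) : Set (Sym2 (V ⊕ Fin 5)) :=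
  {s(Sum.inr 0, Sum.inr 3), s(Sum.inr 0, Sum.inr 4),
   s(Sum.inr 1, Sum.inr 3), s(Sum.inr 1, Sum.inr 4)}

lemma newT_le (hle : T ≤ G) : newT T x y z ≤ attachH₃ G x y z := by
  apply sup_le
  · intro a b h
    rw [SimpleGraph.map_adj] at h
    obtain ⟨u, v, huv, rfl, rfl⟩ := h
    exact Or.inl ((SimpleGraph.map_adj _ _ _ _).2 ⟨u, v, hle huv, rfl, rfl⟩)
  · refine le_trans (fromEdgeSet_mono ?_) le_sup_right
    intro e he
    simp only [Set.mem_insert_iff, Set.mem_singleton_iff] at he ⊢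
    tauto

lemma newT_adj_inl_inl (u v : V) :
    (newT T x y z).Adj (Sum.inl u) (Sum.inl v) ↔ T.Adj u v := by
  simp [newT, SimpleGraph.map_adj, fromEdgeSet_adj, Sym2.eq_iff]

set_option synthInstance.maxSize 20000 in
set_option maxHeartbeats 1000000 in
lemma D_adj (a b : V ⊕ Fin 5) :
    (attachH₃ G x y z \ newT T x y z).Adj a b ↔
      ((∃ u v, (G \ T).Adj u v ∧ Sum.inl u = a ∧ Sum.inl v = b) ∨ s(a, b) ∈ Cset V) := by
  rcases a with u | i <;> rcases b with v | j
  · simp [attachH₃, newT, Cset, sdiff_adj, SimpleGraph.map_adj, fromEdgeSet_adj, Sym2.eq_iff]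
  · simp only [attachH₃, newT, Cset, sdiff_adj, sup_adj, SimpleGraph.map_adj,
      fromEdgeSet_adj, Set.mem_insert_iff, Set.mem_singleton_iff, Sym2.eq_iff]
    simp
    tauto
  · simp only [attachH₃, newT, Cset, sdiff_adj, sup_adj, SimpleGraph.map_adj,
      fromEdgeSet_adj, Set.mem_insert_iff, Set.mem_singleton_iff, Sym2.eq_iff]
    simp
    tauto
  · simp only [attachH₃, newT, Cset, sdiff_adj, sup_adj, SimpleGraph.map_adj,
      fromEdgeSet_adj, Set.mem_insert_iff, Set.mem_singleton_iff, Sym2.eq_iff]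
    simp
    revert i j
    decide

set_option synthInstance.maxSize 20000 in
lemma newT_nbr1 (u : V ⊕ Fin 5) (h : (newT T x y z).Adj (Sum.inr 1) u) : u = Sum.inr 2 := by
  rcases u with u | j
  · simp [newT, SimpleGraph.map_adj, fromEdgeSet_adj, Sym2.eq_iff] at h
  · simp [newT, SimpleGraph.map_adj, fromEdgeSet_adj, Sym2.eq_iff] at h
    obtain ⟨rfl, -⟩ := h; rfl

set_option synthInstance.maxSize 20000 in
lemma newT_nbr0 (u : V ⊕ Fin 5) (h : (newT T x y z).Adj (Sum.inr 0) u) : u = Sum.inr 2 := by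
  rcases u with u | j
  · simp [newT, SimpleGraph.map_adj, fromEdgeSet_adj, Sym2.eq_iff] at h
  · simp [newT, SimpleGraph.map_adj, fromEdgeSet_adj, Sym2.eq_iff] at h
    obtain ⟨rfl, -⟩ := h; rfl

set_option synthInstance.maxSize 20000 in
lemma newT_nbr3 (u : V ⊕ Fin 5) (h : (newT T x y z).Adj (Sum.inr 3) u) : u = Sum.inl y := by
  rcases u with u | j
  · simp [newT, SimpleGraph.map_adj, fromEdgeSet_adj, Sym2.eq_iff] at h
    obtain ⟨-, rfl⟩ := h; rfl
  · simp [newT, SimpleGraph.map_adj, fromEdgeSet_adj, Sym2.eq_iff] at h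

set_option synthInstance.maxSize 20000 in
lemma newT_nbr4 (u : V ⊕ Fin 5) (h : (newT T x y z).Adj (Sum.inr 4) u) : u = Sum.inl z := by
  rcases u with u | j
  · simp [newT, SimpleGraph.map_adj, fromEdgeSet_adj, Sym2.eq_iff] at h
    obtain ⟨-, rfl⟩ := h; rfl
  · simp [newT, SimpleGraph.map_adj, fromEdgeSet_adj, Sym2.eq_iff] at h

set_option synthInstance.maxSize 20000 in
lemma newT_nbr2 (u : V ⊕ Fin 5) (h : (newT T x y z).Adj (Sum.inr 2) u) :
    u = Sum.inr 0 ∨ u = Sum.inr 1 ∨ u = Sum.inl x := by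
  rcases u with u | j
  · simp [newT, SimpleGraph.map_adj, fromEdgeSet_adj, Sym2.eq_iff] at h
    obtain ⟨-, rfl⟩ := h; tauto
  · simp [newT, SimpleGraph.map_adj, fromEdgeSet_adj, Sym2.eq_iff] at h
    rcases h with ⟨⟨rfl, -⟩ | ⟨rfl, -⟩, -⟩ <;> tauto

lemma newT_isTree (hT : T.IsTree) : (newT T x y z).IsTree := by
  classical
  have hhomadj : ∀ {u v : V}, T.Adj u v → (newT T x y z).Adj (Sum.inl u) (Sum.inl v) :=
    fun h => (newT_adj_inl_inl T x y z _ _).2 h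
  constructor
  · -- connected
    rw [connected_iff]
    refine ⟨?_, ⟨Sum.inl x⟩⟩
    have hxx : ∀ u : V, (newT T x y z).Reachable (Sum.inl u) (Sum.inl x) := fun u =>
      Reachable.map (⟨Sum.inl, hhomadj⟩ : T →g newT T x y z) (hT.isConnected.preconnected u x)
    have e2x : (newT T x y z).Adj (Sum.inr 2) (Sum.inl x) := by
      exact (sup_adj _ _ _ _).mpr (Or.inr ((fromEdgeSet_adj _).2 ⟨by simp, by simp⟩))
    have e02 : (newT T x y z).Adj (Sum.inr 0) (Sum.inr 2) := by
      exact (sup_adj _ _ _ _).mpr (Or.inr ((fromEdgeSet_adj _).2 ⟨by simp, by simp⟩))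
    have e12 : (newT T x y z).Adj (Sum.inr 1) (Sum.inr 2) := by
      exact (sup_adj _ _ _ _).mpr (Or.inr ((fromEdgeSet_adj _).2 ⟨by simp, by simp⟩))
    have e3y : (newT T x y z).Adj (Sum.inr 3) (Sum.inl y) := by
      exact (sup_adj _ _ _ _).mpr (Or.inr ((fromEdgeSet_adj _).2 ⟨by simp, by simp⟩))
    have e4z : (newT T x y z).Adj (Sum.inr 4) (Sum.inl z) := by
      exact (sup_adj _ _ _ _).mpr (Or.inr ((fromEdgeSet_adj _).2 ⟨by simp, by simp⟩))
    have hr : ∀ a : V ⊕ Fin 5, (newT T x y z).Reachable a (Sum.inl x) := by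
      rintro (u | i)
      · exact hxx u
      · fin_cases i
        · exact e02.reachable.trans (e2x.reachable)
        · exact e12.reachable.trans (e2x.reachable)
        · exact e2x.reachable
        · exact e3y.reachable.trans (hxx y)
        · exact e4z.reachable.trans (hxx z)
    intro a b
    exact (hr a).trans (hr b).symm
  · -- acyclic
    intro a c hc
    classical
    rcases Classical.em (Sum.inr 1 ∈ c.support) with h1 | h1
    · exact no_cycle_unique_nbr (hc.rotate h1) fun u _ h => newT_nbr1 T x y z u h
    rcases Classical.em (Sum.inr 0 ∈ c.support) with h0 | h0
    · exact no_cycle_unique_nbr (hc.rotate h0) fun u _ h => newT_nbr0 T x y z u h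
    rcases Classical.em (Sum.inr 3 ∈ c.support) with h3 | h3
    · exact no_cycle_unique_nbr (hc.rotate h3) fun u _ h => newT_nbr3 T x y z u h
    rcases Classical.em (Sum.inr 4 ∈ c.support) with h4 | h4
    · exact no_cycle_unique_nbr (hc.rotate h4) fun u _ h => newT_nbr4 T x y z u h
    rcases Classical.em (Sum.inr 2 ∈ c.support) with h2 | h2
    · refine no_cycle_unique_nbr (w := Sum.inl x) (hc.rotate h2) fun u hu h => ?_
      rcases newT_nbr2 T x y z u h with rfl | rfl | rfl
      · exact absurd (mem_support_rotate h2 hu) h0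
      · exact absurd (mem_support_rotate h2 hu) h1
      · rfl
    · have hsupp : ∀ v ∈ c.support, ∃ u, v = Sum.inl u := by
        rintro (u | i) hvs
        · exact ⟨u, rfl⟩
        · exfalso
          fin_cases i
          · exact h0 hvs
          · exact h1 hvs
          · exact h2 hvs
          · exact h3 hvs
          · exact h4 hvs
      have hedges : ∀ e ∈ c.edges, e ∈ (T.map Function.Embedding.inl).edgeSet := by
        intro e he
        induction e using Sym2.ind with
        | _ p q =>
          obtain ⟨u, rfl⟩ := hsupp _ (Walk.fst_mem_support_of_mem_edges c he)
          obtain ⟨v, rfl⟩ := hsupp _ (Walk.snd_mem_support_of_mem_edges c he)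
          have hadjc := Walk.adj_of_mem_edges c he
          rw [newT_adj_inl_inl] at hadjc
          exact (SimpleGraph.map_adj _ _ _ _).2 ⟨u, v, hadjc, rfl, rfl⟩
      exact map_isAcyclic Function.Embedding.inl hT.IsAcyclic _ (hc.transfer hedges)

/-! ### The component structure of the co-tree graph -/

/-- Projection of vertices to components of `G \ T` plus two extra components. -/
def phi0 : V ⊕ Fin 5 → (G \ T).ConnectedComponent ⊕ Fin 2 :=
  Sum.elim (fun u => Sum.inl ((G \ T).connectedComponentMk u))
    (fun i => Sum.inr (if i = 2 then 0 else 1))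

lemma phi0_adj : ∀ a b, (attachH₃ G x y z \ newT T x y z).Adj a b →
    phi0 G T a = phi0 G T b := by
  intro a b h
  rw [D_adj] at h
  rcases h with ⟨u, v, huv, rfl, rfl⟩ | hC
  · simp only [phi0, Sum.elim_inl]
    exact congrArg Sum.inl (ConnectedComponent.sound huv.reachable)
  · simp only [Cset, Set.mem_insert_iff, Set.mem_singleton_iff] at hC
    rcases hC with h | h | h | h <;> rw [Sym2.eq_iff] at h <;>
      rcases h with ⟨rfl, rfl⟩ | ⟨rfl, rfl⟩ <;> rfl

def phi : (attachH₃ G x y z \ newT T x y z).ConnectedComponent →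
    (G \ T).ConnectedComponent ⊕ Fin 2 :=
  ccLift (phi0 G T) (phi0_adj G T x y z)

def psi0 : (G \ T).ConnectedComponent →
    (attachH₃ G x y z \ newT T x y z).ConnectedComponent :=
  ccLift (fun u => (attachH₃ G x y z \ newT T x y z).connectedComponentMk (Sum.inl u))
    (fun u v h => ConnectedComponent.sound
      ((D_adj G T x y z _ _).2 (Or.inl ⟨u, v, h, rfl, rfl⟩)).reachable)

def psi : (G \ T).ConnectedComponent ⊕ Fin 2 →
    (attachH₃ G x y z \ newT T x y z).ConnectedComponent :=
  Sum.elim (psi0 G T x y z)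
    (fun i => if i = 0 then (attachH₃ G x y z \ newT T x y z).connectedComponentMk (Sum.inr 2)
      else (attachH₃ G x y z \ newT T x y z).connectedComponentMk (Sum.inr 0))

lemma Dadj03 : (attachH₃ G x y z \ newT T x y z).Adj (Sum.inr 0) (Sum.inr 3) :=
  (D_adj G T x y z _ _).2 (Or.inr (by simp [Cset]))

lemma Dadj04 : (attachH₃ G x y z \ newT T x y z).Adj (Sum.inr 0) (Sum.inr 4) :=
  (D_adj G T x y z _ _).2 (Or.inr (by simp [Cset]))

lemma Dadj13 : (attachH₃ G x y z \ newT T x y z).Adj (Sum.inr 1) (Sum.inr 3) :=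
  (D_adj G T x y z _ _).2 (Or.inr (by simp [Cset]))

lemma Dadj14 : (attachH₃ G x y z \ newT T x y z).Adj (Sum.inr 1) (Sum.inr 4) :=
  (D_adj G T x y z _ _).2 (Or.inr (by simp [Cset]))

lemma mk3 : (attachH₃ G x y z \ newT T x y z).connectedComponentMk (Sum.inr 3) =
    (attachH₃ G x y z \ newT T x y z).connectedComponentMk (Sum.inr 0) :=
  (ConnectedComponent.sound (Dadj03 G T x y z).reachable).symm

lemma mk4 : (attachH₃ G x y z \ newT T x y z).connectedComponentMk (Sum.inr 4) =
    (attachH₃ G x y z \ newT T x y z).connectedComponentMk (Sum.inr 0) :=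
  (ConnectedComponent.sound (Dadj04 G T x y z).reachable).symm

lemma mk1 : (attachH₃ G x y z \ newT T x y z).connectedComponentMk (Sum.inr 1) =
    (attachH₃ G x y z \ newT T x y z).connectedComponentMk (Sum.inr 0) :=
  ConnectedComponent.sound ((Dadj13 G T x y z).reachable.trans
    (Dadj03 G T x y z).reachable.symm)

lemma phi_psi : ∀ s, phi G T x y z (psi G T x y z s) = s := by
  rintro (c | i)
  · induction c using ConnectedComponent.ind with
    | _ u => simp [phi, psi, psi0, phi0]
  · fin_cases i <;> simp [phi, psi, phi0]

lemma psi_phi : ∀ c, psi G T x y z (phi G T x y z c) = c := by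
  apply ConnectedComponent.ind
  rintro (u | i)
  · simp [phi, psi, psi0, phi0]
  · fin_cases i
    · simp [phi, psi, phi0]
    · simpa [phi, psi, phi0] using (mk1 G T x y z).symm
    · simp [phi, psi, phi0]
    · simpa [phi, psi, phi0] using (mk3 G T x y z).symm
    · simpa [phi, psi, phi0] using (mk4 G T x y z).symm

/-! ### Edge counts in each component -/

lemma cardA (c : (G \ T).ConnectedComponent) :
    Nat.card {e : Sym2 (V ⊕ Fin 5) // e ∈ (attachH₃ G x y z \ newT T x y z).edgeSet ∧
      ∀ v ∈ e, (attachH₃ G x y z \ newT T x y z).connectedComponentMk v =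
        psi G T x y z (Sum.inl c)} =
    Nat.card {e : Sym2 V // e ∈ (G \ T).edgeSet ∧
      ∀ v ∈ e, (G \ T).connectedComponentMk v = c} := by
  symm
  have hmap : ∀ e : Sym2 V,
      (e ∈ (G \ T).edgeSet ∧ ∀ v ∈ e, (G \ T).connectedComponentMk v = c) →
      (Sym2.map Sum.inl e ∈ (attachH₃ G x y z \ newT T x y z).edgeSet ∧
        ∀ v ∈ Sym2.map Sum.inl e,
          (attachH₃ G x y z \ newT T x y z).connectedComponentMk v =
            psi G T x y z (Sum.inl c)) := by
    intro e
    induction e using Sym2.ind with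
    | _ u v =>
      rintro ⟨h1, h2⟩
      rw [Sym2.map_pair_eq]
      rw [mem_edgeSet] at h1
      refine ⟨(D_adj G T x y z _ _).2 (Or.inl ⟨u, v, h1, rfl, rfl⟩), ?_⟩
      intro w hw
      rw [Sym2.mem_iff] at hw
      rcases hw with rfl | rfl
      · rw [← h2 u (Sym2.mem_iff.2 (Or.inl rfl))]; rfl
      · rw [← h2 v (Sym2.mem_iff.2 (Or.inr rfl))]; rfl
  refine Nat.card_congr (Equiv.ofBijective (fun e => ⟨Sym2.map Sum.inl e.1, hmap e.1 e.2⟩)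
    ⟨?_, ?_⟩)
  · intro e1 e2 h
    exact Subtype.ext (Sym2.map.injective Sum.inl_injective (congrArg Subtype.val h))
  · rintro ⟨e', h1, h2⟩
    revert h1 h2
    induction e' using Sym2.ind with
    | _ a b =>
      intro h1 h2
      rw [mem_edgeSet, D_adj] at h1
      rcases h1 with ⟨u, v, huv, rfl, rfl⟩ | hC
      · have hcomp : ∀ w, w = u ∨ w = v → (G \ T).connectedComponentMk w = c := by
          intro w hw
          have h2' := h2 (Sum.inl w) (by rcases hw with rfl | rfl <;> simp)
          have hph := congrArg (phi G T x y z) h2'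
          rw [phi_psi] at hph
          simpa [phi, phi0] using hph
        refine ⟨⟨s(u, v), ?_, ?_⟩, ?_⟩
        · rw [mem_edgeSet]; exact huv
        · intro w hw; rw [Sym2.mem_iff] at hw; exact hcomp w hw
        · exact Subtype.ext (Sym2.map_pair_eq _ _ _)
      · exfalso
        obtain ⟨i, hi⟩ : ∃ i : Fin 5, Sum.inr i ∈ s(a, b) := by
          simp only [Cset, Set.mem_insert_iff, Set.mem_singleton_iff] at hC
          rcases hC with h | h | h | h <;> rw [Sym2.eq_iff] at h <;>
            rcases h with ⟨rfl, rfl⟩ | ⟨rfl, rfl⟩ <;> exact ⟨_, Sym2.mem_iff.2 (Or.inl rfl)⟩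
        have hph := congrArg (phi G T x y z) (h2 _ hi)
        rw [phi_psi] at hph
        simp [phi, phi0] at hph

lemma cardB0 :
    Nat.card {e : Sym2 (V ⊕ Fin 5) // e ∈ (attachH₃ G x y z \ newT T x y z).edgeSet ∧
      ∀ v ∈ e, (attachH₃ G x y z \ newT T x y z).connectedComponentMk v =
        psi G T x y z (Sum.inr 0)} = 0 := by
  haveI : IsEmpty {e : Sym2 (V ⊕ Fin 5) // e ∈ (attachH₃ G x y z \ newT T x y z).edgeSet ∧
      ∀ v ∈ e, (attachH₃ G x y z \ newT T x y z).connectedComponentMk v =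
        psi G T x y z (Sum.inr 0)} := by
    refine ⟨?_⟩
    rintro ⟨e', h1, h2⟩
    revert h1 h2
    induction e' using Sym2.ind with
    | _ a b =>
      intro h1 h2
      rw [mem_edgeSet, D_adj] at h1
      rcases h1 with ⟨u, v, huv, rfl, rfl⟩ | hC
      · have hph := congrArg (phi G T x y z) (h2 (Sum.inl u) (by simp))
        rw [phi_psi] at hph
        simp [phi, phi0] at hph
      · obtain ⟨i, hi, hne⟩ : ∃ i : Fin 5, Sum.inr i ∈ s(a, b) ∧ i ≠ 2 := by
          simp only [Cset, Set.mem_insert_iff, Set.mem_singleton_iff] at hC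
          rcases hC with h | h | h | h <;> rw [Sym2.eq_iff] at h <;>
            rcases h with ⟨rfl, rfl⟩ | ⟨rfl, rfl⟩ <;>
              exact ⟨_, Sym2.mem_iff.2 (Or.inl rfl), by decide⟩
        have hph := congrArg (phi G T x y z) (h2 _ hi)
        rw [phi_psi] at hph
        simp [phi, phi0, hne] at hph
  exact Nat.card_of_isEmpty

lemma cardB1 :
    Nat.card {e : Sym2 (V ⊕ Fin 5) // e ∈ (attachH₃ G x y z \ newT T x y z).edgeSet ∧
      ∀ v ∈ e, (attachH₃ G x y z \ newT T x y z).connectedComponentMk v =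
        psi G T x y z (Sum.inr 1)} = 4 := by
  have hpsi : psi G T x y z (Sum.inr 1) =
      (attachH₃ G x y z \ newT T x y z).connectedComponentMk (Sum.inr 0) := by
    simp [psi]
  have hset : ∀ e' : Sym2 (V ⊕ Fin 5),
      (e' ∈ (attachH₃ G x y z \ newT T x y z).edgeSet ∧
        ∀ v ∈ e', (attachH₃ G x y z \ newT T x y z).connectedComponentMk v =
          psi G T x y z (Sum.inr 1)) ↔ e' ∈ Cset V := by
    intro e'
    constructor
    · rintro ⟨h1, h2⟩
      revert h1 h2
      induction e' using Sym2.ind with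
      | _ a b =>
        intro h1 h2
        rw [mem_edgeSet, D_adj] at h1
        rcases h1 with ⟨u, v, huv, rfl, rfl⟩ | hC
        · exfalso
          have hph := congrArg (phi G T x y z) (h2 (Sum.inl u) (by simp))
          rw [phi_psi] at hph
          simp [phi, phi0] at hph
        · exact hC
    · intro hC
      have hC' := hC
      simp only [Cset, Set.mem_insert_iff, Set.mem_singleton_iff] at hC'
      have hcomp : ∀ w : V ⊕ Fin 5, w = Sum.inr 0 ∨ w = Sum.inr 1 ∨ w = Sum.inr 3 ∨
          w = Sum.inr 4 → (attachH₃ G x y z \ newT T x y z).connectedComponentMk w =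
            psi G T x y z (Sum.inr 1) := by
        rintro w (rfl | rfl | rfl | rfl) <;> rw [hpsi]
        · exact mk1 G T x y z
        · exact mk3 G T x y z
        · exact mk4 G T x y z
      rcases hC' with rfl | rfl | rfl | rfl
      · exact ⟨(D_adj G T x y z _ _).2 (Or.inr hC), fun w hw => hcomp w (by
          rw [Sym2.mem_iff] at hw; tauto)⟩
      · exact ⟨(D_adj G T x y z _ _).2 (Or.inr hC), fun w hw => hcomp w (by
          rw [Sym2.mem_iff] at hw; tauto)⟩
      · exact ⟨(D_adj G T x y z _ _).2 (Or.inr hC), fun w hw => hcomp w (by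
          rw [Sym2.mem_iff] at hw; tauto)⟩
      · exact ⟨(D_adj G T x y z _ _).2 (Or.inr hC), fun w hw => hcomp w (by
          rw [Sym2.mem_iff] at hw; tauto)⟩
  rw [Nat.card_congr (Equiv.subtypeEquivRight hset)]
  rw [Nat.card_coe_set_eq]
  rw [Cset]
  rw [Set.ncard_insert_of_notMem (by simp [Sym2.eq_iff])
      (((Set.finite_singleton _).insert _).insert _),
    Set.ncard_insert_of_notMem (by simp [Sym2.eq_iff]) ((Set.finite_singleton _).insert _),
    Set.ncard_insert_of_notMem (by simp [Sym2.eq_iff]) (Set.finite_singleton _),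
    Set.ncard_singleton]

/-! ### The deficiency computation -/

lemma xi_newT [Fintype V] : xi (attachH₃ G x y z) (newT T x y z) = xi G T := by
  unfold xi
  haveI hEmpty : IsEmpty {i : Fin 2 //
      Odd (Nat.card {e : Sym2 (V ⊕ Fin 5) //
        e ∈ (attachH₃ G x y z \ newT T x y z).edgeSet ∧
        ∀ v ∈ e, (attachH₃ G x y z \ newT T x y z).connectedComponentMk v =
          psi G T x y z (Sum.inr i)})} := by
    refine ⟨?_⟩
    rintro ⟨i, hi⟩
    have hi01 : i = 0 ∨ i = 1 := by omega
    rcases hi01 with rfl | rfl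
    · rw [cardB0] at hi
      simp at hi
    · rw [cardB1] at hi
      revert hi
      decide
  refine Nat.card_congr (Equiv.trans (Equiv.subtypeEquiv
    (⟨phi G T x y z, psi G T x y z, psi_phi G T x y z, phi_psi G T x y z⟩ :
      (attachH₃ G x y z \ newT T x y z).ConnectedComponent ≃
        (G \ T).ConnectedComponent ⊕ Fin 2)
    (q := fun s => Odd (Nat.card {e : Sym2 (V ⊕ Fin 5) //
        e ∈ (attachH₃ G x y z \ newT T x y z).edgeSet ∧
        ∀ v ∈ e, (attachH₃ G x y z \ newT T x y z).connectedComponentMk v =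
          psi G T x y z s})) ?_) (Equiv.trans Equiv.subtypeSum (Equiv.trans
    (Equiv.sumEmpty _ _) (Equiv.subtypeEquivRight fun c => by rw [cardA]))))
  intro c
  simp only [Equiv.coe_fn_mk]
  rw [psi_phi]

end Main

end AttachH3Aux

/-- let `G` be a connected graph with a spanning tree `T` of Xuong
deficiency `ξ(G,T) ≤ 1`.  If `G'` is obtained from `G` by attaching a copy of `H₃`
at three distinct vertices of `G`, then `G'` has a spanning tree `T'` with
`ξ(G',T') = ξ(G,T)`. -/
theorem attachH3_xuong_tree {V : Type*} [Fintype V] (G T : SimpleGraph V)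
    (hle : T ≤ G) (htree : T.IsTree) (hconn : G.Connected) (hxi : xi G T ≤ 1)
    (x y z : V) (hxy : x ≠ y) (hyz : y ≠ z) (hxz : x ≠ z) :
    ∃ T' : SimpleGraph (V ⊕ Fin 5), T' ≤ attachH₃ G x y z ∧ T'.IsTree ∧
      xi (attachH₃ G x y z) T' = xi G T :=
  ⟨AttachH3Aux.newT T x y z, AttachH3Aux.newT_le G T x y z hle,
    AttachH3Aux.newT_isTree T x y z htree, AttachH3Aux.xi_newT G T x y z⟩
end

section
/- If G is a cubic graph, v₁v₂v₃ is a triangle in G, and Π is an embedding of G − v₁v₂ in a surface, then v₁ and v₂ lie on the boundary of a common face of Π; consequently G embeds in the same surface. -/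
open SimpleGraph

section PermAux
set_option linter.unusedSectionVars false
set_option linter.unusedVariables false
variable {α : Type*} [DecidableEq α] {π : Equiv.Perm α} {x y : α}

theorem sc_step (π : Equiv.Perm α) (t : α) : π.SameCycle t (π t) := ⟨1, by simp⟩

theorem sc_fixed {σ : Equiv.Perm α} {t z : α} (h : σ t = t) (hs : σ.SameCycle t z) : z = t := by
  obtain ⟨n, hn⟩ := hs
  rw [Equiv.Perm.zpow_apply_eq_self_of_apply_eq_self h] at hn
  exact hn.symm

theorem pow_mod_period (σ : Equiv.Perm α) {t : α} {j : ℕ} (hj : 0 < j) (ht : (σ^j) t = t)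
    (n : ℕ) : (σ^n) t = (σ^(n % j)) t := by
  induction n using Nat.strong_induction_on with
  | _ n ih =>
    rcases lt_or_ge n j with h | h
    · rw [Nat.mod_eq_of_lt h]
    · have h1 : n - j + j = n := Nat.sub_add_cancel h
      have h2 : (σ^n) t = (σ^(n-j)) t := by
        conv_lhs => rw [← h1, pow_add, Equiv.Perm.mul_apply, ht]
      rw [h2, ih (n-j) (by omega), Nat.mod_eq_sub_mod h]

theorem traj (hxy : x ≠ y) {j : ℕ}
    (hmid : ∀ i, 0 < i → i < j → (π^i) y ≠ x ∧ (π^i) y ≠ y) :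
    ∀ i, 0 < i → i ≤ j → ((π * Equiv.swap x y)^i) x = (π^i) y := by
  intro i
  induction i with
  | zero => omega
  | succ i ih =>
    intro _ hle
    rcases Nat.eq_zero_or_pos i with h0 | hpos
    · subst h0
      simp [Equiv.Perm.mul_apply]
    · have hi := ih hpos (by omega)
      have hm := hmid i hpos (by omega)
      rw [pow_succ', Equiv.Perm.mul_apply, Equiv.Perm.mul_apply, hi,
        Equiv.swap_apply_of_ne_of_ne hm.1 hm.2, pow_succ', Equiv.Perm.mul_apply]

theorem merge_sc [Finite α] (hxy : x ≠ y) (h : ¬π.SameCycle x y) :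
    (π * Equiv.swap x y).SameCycle x y := by
  have hex : ∃ n, 0 < n ∧ (π^n) y = y :=
    ⟨orderOf π, orderOf_pos π, by rw [pow_orderOf_eq_one]; rfl⟩
  classical
  set j := Nat.find hex with hjdef
  obtain ⟨hj0, hjy⟩ := Nat.find_spec hex
  have hmid : ∀ i, 0 < i → i < j → (π^i) y ≠ x ∧ (π^i) y ≠ y := by
    intro i hi hij
    constructor
    · intro hc; exact h (Equiv.Perm.SameCycle.symm ⟨(i : ℤ), by rw [zpow_natCast, hc]⟩)
    · intro hc; exact Nat.find_min hex hij ⟨hi, hc⟩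
  have := traj hxy hmid j hj0 le_rfl
  exact ⟨(j : ℤ), by rw [zpow_natCast, this, hjy]⟩

theorem split_not_sc [Finite α] (hxy : x ≠ y) (h : π.SameCycle x y) :
    ¬(π * Equiv.swap x y).SameCycle x y := by
  have hex : ∃ n, 0 < n ∧ (π^n) y = x := by
    obtain ⟨n, hn0, -, hn⟩ := h.symm.exists_pow_eq''
    exact ⟨n, hn0, hn⟩
  classical
  set j := Nat.find hex with hjdef
  obtain ⟨hj0, hjy⟩ := Nat.find_spec hex
  have hmid : ∀ i, 0 < i → i < j → (π^i) y ≠ x ∧ (π^i) y ≠ y := by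
    intro i hi hij
    constructor
    · intro hc; exact Nat.find_min hex hij ⟨hi, hc⟩
    · intro hc
      have h2 : (π^j) y = (π^(j-i)) y := by
        conv_lhs => rw [← Nat.sub_add_cancel hij.le, pow_add, Equiv.Perm.mul_apply, hc]
      exact Nat.find_min hex (show j - i < j by omega) ⟨by omega, by rw [← h2, hjy]⟩
  have hper : ((π * Equiv.swap x y)^j) x = x := by
    rw [traj hxy hmid j hj0 le_rfl, hjy]
  intro hc
  obtain ⟨n, -, hn⟩ := hc.exists_pow_eq'
  rw [pow_mod_period _ hj0 hper] at hn
  rcases Nat.eq_zero_or_pos (n % j) with h0 | hpos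
  · rw [h0] at hn; simp at hn; exact hxy hn
  · have hlt : n % j < j := Nat.mod_lt _ hj0
    rw [traj hxy hmid _ hpos hlt.le] at hn
    exact (hmid _ hpos hlt).2 hn

theorem key_cases [Finite α] {z w : α} (h : (π * Equiv.swap x y).SameCycle z w) :
    π.SameCycle z w ∨ (π.SameCycle z x ∧ π.SameCycle y w) ∨
      (π.SameCycle z y ∧ π.SameCycle x w) := by
  obtain ⟨n, -, hn⟩ := h.exists_pow_eq'
  clear h
  induction n generalizing w with
  | zero => simp at hn; exact Or.inl (hn ▸ Equiv.Perm.SameCycle.refl _ _)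
  | succ n ih =>
    rw [pow_succ', Equiv.Perm.mul_apply, Equiv.Perm.mul_apply] at hn
    have IH := ih rfl
    rcases eq_or_ne (((π * Equiv.swap x y) ^ n) z) x with hx | hx
    · rw [hx, Equiv.swap_apply_left] at hn
      subst hn
      rcases IH with h | ⟨h1, h2⟩ | ⟨h1, h2⟩
      · exact Or.inr (Or.inl ⟨hx ▸ h, sc_step π y⟩)
      · exact Or.inr (Or.inl ⟨h1, sc_step π y⟩)
      · exact Or.inl (h1.trans (sc_step π y))
    · rcases eq_or_ne (((π * Equiv.swap x y) ^ n) z) y with hy | hy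
      · rw [hy, Equiv.swap_apply_right] at hn
        subst hn
        rcases IH with h | ⟨h1, h2⟩ | ⟨h1, h2⟩
        · exact Or.inr (Or.inr ⟨hy ▸ h, sc_step π x⟩)
        · exact Or.inl (h1.trans (sc_step π x))
        · exact Or.inr (Or.inr ⟨h1, sc_step π x⟩)
      · rw [Equiv.swap_apply_of_ne_of_ne hx hy] at hn
        subst hn
        rcases IH with h | ⟨h1, h2⟩ | ⟨h1, h2⟩
        · exact Or.inl (h.trans (sc_step π _))
        · exact Or.inr (Or.inl ⟨h1, h2.trans (sc_step π _)⟩)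
        · exact Or.inr (Or.inr ⟨h1, h2.trans (sc_step π _)⟩)

theorem key_cases' [Finite α] {z w : α} (h : π.SameCycle z w) :
    (π * Equiv.swap x y).SameCycle z w ∨
      ((π * Equiv.swap x y).SameCycle z x ∧ (π * Equiv.swap x y).SameCycle y w) ∨
      ((π * Equiv.swap x y).SameCycle z y ∧ (π * Equiv.swap x y).SameCycle x w) := by
  have hπ : π = (π * Equiv.swap x y) * Equiv.swap x y := by
    rw [mul_assoc, Equiv.swap_mul_self, mul_one]
  exact key_cases (hπ ▸ h)

theorem merge_transfer [Finite α] (hxy : x ≠ y) (h : ¬π.SameCycle x y) {z w : α}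
    (hzw : π.SameCycle z w) : (π * Equiv.swap x y).SameCycle z w := by
  have hm := merge_sc hxy h
  rcases key_cases' (x := x) (y := y) hzw with h1 | ⟨h1, h2⟩ | ⟨h1, h2⟩
  · exact h1
  · exact (h1.trans hm).trans h2
  · exact (h1.trans hm.symm).trans h2

theorem split_transfer [Finite α] (h : π.SameCycle x y) {z w : α}
    (hzw : (π * Equiv.swap x y).SameCycle z w) : π.SameCycle z w := by
  rcases key_cases hzw with h1 | ⟨h1, h2⟩ | ⟨h1, h2⟩
  · exact h1
  · exact (h1.trans h).trans h2
  · exact (h1.trans h.symm).trans h2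
end PermAux

section Count
variable {α : Type*} [DecidableEq α] [Finite α] {π : Equiv.Perm α} {x y : α}

theorem count_merge (hxy : x ≠ y) (h : ¬π.SameCycle x y) :
    Nat.card (Quotient (Equiv.Perm.SameCycle.setoid π)) ≤
      Nat.card (Quotient (Equiv.Perm.SameCycle.setoid (π * Equiv.swap x y))) + 1 := by
  classical
  set σ := π * Equiv.swap x y with hσ
  set f : α → (Quotient (Equiv.Perm.SameCycle.setoid σ)) ⊕ Unit := fun z =>
    if π.SameCycle z y then Sum.inr () else Sum.inl (Quotient.mk _ z) with hf
  have wd : ∀ a b : α, (Equiv.Perm.SameCycle.setoid π).r a b → f a = f b := by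
    intro a b hab
    by_cases ha : π.SameCycle a y
    · rw [hf]; simp only [if_pos ha, if_pos (hab.symm.trans ha)]
    · have hb : ¬ π.SameCycle b y := fun hc => ha (hab.trans hc)
      rw [hf]; simp only [if_neg ha, if_neg hb]
      exact congrArg Sum.inl (Quotient.sound (merge_transfer hxy h hab))
  have inj : Function.Injective (Quotient.lift f wd) := by
    rintro ⟨a⟩ ⟨b⟩ hab
    change f a = f b at hab
    apply Quotient.sound
    rw [hf] at hab
    beta_reduce at hab
    by_cases ha : π.SameCycle a y <;> by_cases hb : π.SameCycle b y
    · exact ha.trans hb.symm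
    · rw [if_pos ha, if_neg hb] at hab; exact absurd hab (by simp)
    · rw [if_neg ha, if_pos hb] at hab; exact absurd hab (by simp)
    · rw [if_neg ha, if_neg hb] at hab
      have : σ.SameCycle a b := Quotient.exact (Sum.inl.inj hab)
      rcases key_cases this with h1 | ⟨h1, h2⟩ | ⟨h1, h2⟩
      · exact h1
      · exact absurd (h2.symm) hb
      · exact absurd h1 ha
  calc Nat.card (Quotient (Equiv.Perm.SameCycle.setoid π))
      ≤ Nat.card ((Quotient (Equiv.Perm.SameCycle.setoid σ)) ⊕ Unit) :=
        Nat.card_le_card_of_injective _ inj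
    _ = Nat.card (Quotient (Equiv.Perm.SameCycle.setoid σ)) + 1 := by
        rw [Nat.card_sum]; simp

theorem count_split (hxy : x ≠ y) (h : π.SameCycle x y) :
    Nat.card (Quotient (Equiv.Perm.SameCycle.setoid π)) + 1 ≤
      Nat.card (Quotient (Equiv.Perm.SameCycle.setoid (π * Equiv.swap x y))) := by
  classical
  set σ := π * Equiv.swap x y with hσ
  set f : α → (Quotient (Equiv.Perm.SameCycle.setoid π)) ⊕ Unit := fun z =>
    if σ.SameCycle z y then Sum.inr () else Sum.inl (Quotient.mk _ z) with hf
  have wd : ∀ a b : α, (Equiv.Perm.SameCycle.setoid σ).r a b → f a = f b := by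
    intro a b hab
    by_cases ha : σ.SameCycle a y
    · rw [hf]; simp only [if_pos ha, if_pos (hab.symm.trans ha)]
    · have hb : ¬ σ.SameCycle b y := fun hc => ha (hab.trans hc)
      rw [hf]; simp only [if_neg ha, if_neg hb]
      exact congrArg Sum.inl (Quotient.sound (split_transfer h hab))
  have surj : Function.Surjective (Quotient.lift f wd) := by
    rintro (q | u)
    · obtain ⟨w, rfl⟩ := q.exists_rep
      by_cases hw : σ.SameCycle w y
      · refine ⟨Quotient.mk _ x, ?_⟩
        show f x = _
        rw [hf]
        beta_reduce
        rw [if_neg (split_not_sc hxy h)]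
        refine congrArg Sum.inl (Quotient.sound ?_)
        exact h.trans (split_transfer h hw).symm
      · refine ⟨Quotient.mk _ w, ?_⟩
        show f w = _
        rw [hf]
        beta_reduce
        rw [if_neg hw]
    · refine ⟨Quotient.mk _ y, ?_⟩
      show f y = _
      rw [hf]
      beta_reduce
      rw [if_pos (Equiv.Perm.SameCycle.refl _ _)]
  calc Nat.card (Quotient (Equiv.Perm.SameCycle.setoid π)) + 1
      = Nat.card ((Quotient (Equiv.Perm.SameCycle.setoid π)) ⊕ Unit) := by
        rw [Nat.card_sum]; simp
    _ ≤ Nat.card (Quotient (Equiv.Perm.SameCycle.setoid σ)) :=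
        Nat.card_le_card_of_surjective _ surj
end Count

/-- A rotation system (combinatorial embedding into an orientable surface):
a permutation of the darts whose cycles are exactly the stars at the vertices. -/
structure RotationSystem {V : Type*} (G : SimpleGraph V) where
  rot : Equiv.Perm G.Dart
  fst_rot : ∀ d, (rot d).fst = d.fst
  star_cyc : ∀ d d' : G.Dart, d.fst = d'.fst → rot.SameCycle d d'

/-- The dart-reversal involution as a permutation. -/
def dartSymmPerm {V : Type*} (G : SimpleGraph V) : Equiv.Perm G.Dart :=
  ⟨SimpleGraph.Dart.symm, SimpleGraph.Dart.symm,
    SimpleGraph.Dart.symm_symm, SimpleGraph.Dart.symm_symm⟩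

/-- The face-tracing permutation of a rotation system. -/
def facePerm {V : Type*} {G : SimpleGraph V} (R : RotationSystem G) : Equiv.Perm G.Dart :=
  (dartSymmPerm G).trans R.rot

/-- The number of faces of the embedding determined by a rotation system: the number of
orbits of the face-tracing permutation, plus one face for each isolated vertex. -/
noncomputable def numFaces {V : Type*} {G : SimpleGraph V} (R : RotationSystem G) : ℕ :=
  Nat.card (Quotient (Equiv.Perm.SameCycle.setoid (facePerm R))) +
    Nat.card {v : V // ∀ d : G.Dart, d.fst ≠ v}

/-- Twice the total genus of the embedding: `E + 2c - V - F` (Euler's formula). -/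
noncomputable def eulerDefect {V : Type*} {G : SimpleGraph V} (R : RotationSystem G) : ℤ :=
  (Nat.card G.edgeSet : ℤ) + 2 * Nat.card G.ConnectedComponent
    - Nat.card V - numFaces R

/-- if `G` is a cubic graph, `v₁v₂v₃` is a triangle in `G`, and `emb` is
an embedding of `G - v₁v₂` in a surface, then `v₁` and `v₂` lie on the boundary of a
common face of `emb`; consequently `G` embeds in the same surface (there is an
embedding of `G` of no larger genus). -/
theorem cubic_triangle_common_face {V : Type*} [Fintype V] (G : SimpleGraph V)
    (hcubic : ∀ v : V, Nat.card {w : V // G.Adj v w} = 3)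
    (v₁ v₂ v₃ : V) (h₁₂ : G.Adj v₁ v₂) (h₂₃ : G.Adj v₂ v₃) (h₁₃ : G.Adj v₁ v₃)
    (emb : RotationSystem (G.deleteEdges {s(v₁, v₂)})) :
    (∃ d d' : (G.deleteEdges {s(v₁, v₂)}).Dart,
        (facePerm emb).SameCycle d d' ∧ d.fst = v₁ ∧ d'.fst = v₂) ∧
      ∃ emb' : RotationSystem G, eulerDefect emb' ≤ eulerDefect emb := by
  classical
  have hne12 : v₁ ≠ v₂ := h₁₂.ne
  have hne23 : v₂ ≠ v₃ := h₂₃.ne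
  have hne13 : v₁ ≠ v₃ := h₁₃.ne
  haveI : Finite G.Dart := Finite.of_injective _ SimpleGraph.Dart.toProd_injective
  haveI : Finite (G.deleteEdges {s(v₁, v₂)}).Dart := Finite.of_injective _ SimpleGraph.Dart.toProd_injective
  have h13' : (G.deleteEdges {s(v₁, v₂)}).Adj v₁ v₃ := by
    rw [SimpleGraph.deleteEdges_adj]
    refine ⟨h₁₃, fun hc => ?_⟩
    rw [Set.mem_singleton_iff, Sym2.eq_iff] at hc
    rcases hc with ⟨-, h⟩ | ⟨h, -⟩
    · exact hne23 h.symm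
    · exact hne12 h
  have h23' : (G.deleteEdges {s(v₁, v₂)}).Adj v₂ v₃ := by
    rw [SimpleGraph.deleteEdges_adj]
    refine ⟨h₂₃, fun hc => ?_⟩
    rw [Set.mem_singleton_iff, Sym2.eq_iff] at hc
    rcases hc with ⟨h, -⟩ | ⟨-, h⟩
    · exact hne12 h.symm
    · exact hne13 h.symm
  -- third neighbour of v₃
  obtain ⟨x, hadjx, hx1, hx2⟩ : ∃ x, G.Adj v₃ x ∧ x ≠ v₁ ∧ x ≠ v₂ := by
    by_contra hcon
    push_neg at hcon
    have hinj : Function.Injective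
        (fun q : {w : V // G.Adj v₃ w} => (decide (q.val = v₁) : Bool)) := by
      intro q q' hqq'
      by_cases h1 : q.val = v₁ <;> by_cases h2 : q'.val = v₁
      · exact Subtype.ext (h1.trans h2.symm)
      · simp [h1, h2] at hqq'
      · simp [h1, h2] at hqq'
      · exact Subtype.ext ((hcon _ q.prop h1).trans (hcon _ q'.prop h2).symm)
    have hle := Nat.card_le_card_of_injective _ hinj
    rw [hcubic v₃] at hle
    simp [Nat.card_eq_fintype_card] at hle
  have h3x' : (G.deleteEdges {s(v₁, v₂)}).Adj v₃ x := by
    rw [SimpleGraph.deleteEdges_adj]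
    refine ⟨hadjx, fun hc => ?_⟩
    rw [Set.mem_singleton_iff, Sym2.eq_iff] at hc
    rcases hc with ⟨h, -⟩ | ⟨h, -⟩
    · exact hne13 h.symm
    · exact hne23 h.symm
  have hnbr : ∀ w, G.Adj v₃ w → w = v₁ ∨ w = v₂ ∨ w = x := by
    intro w hw
    haveI : Fintype {w : V // G.Adj v₃ w} := Fintype.ofFinite _
    set n1 : {w : V // G.Adj v₃ w} := ⟨v₁, h₁₃.symm⟩ with hn1
    set n2 : {w : V // G.Adj v₃ w} := ⟨v₂, h₂₃.symm⟩ with hn2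
    set n3 : {w : V // G.Adj v₃ w} := ⟨x, hadjx⟩ with hn3
    have hcard : Fintype.card {w : V // G.Adj v₃ w} = 3 := by
      rw [← Nat.card_eq_fintype_card, hcubic]
    have hc3 : ({n1, n2, n3} : Finset {w : V // G.Adj v₃ w}).card = 3 := by
      rw [Finset.card_insert_of_notMem, Finset.card_insert_of_notMem,
        Finset.card_singleton]
      · simp only [Finset.mem_singleton]
        exact fun hc => hx2 (congrArg Subtype.val hc).symm
      · simp only [Finset.mem_insert, Finset.mem_singleton]
        push_neg
        exact ⟨fun hc => hne12 (congrArg Subtype.val hc),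
          fun hc => hx1 (congrArg Subtype.val hc).symm⟩
    have huniv : (Finset.univ : Finset {w : V // G.Adj v₃ w}) = {n1, n2, n3} := by
      apply (Finset.eq_of_subset_of_card_le (Finset.subset_univ _) _).symm
      rw [Finset.card_univ, hcard, hc3]
    have hmem : (⟨w, hw⟩ : {w : V // G.Adj v₃ w}) ∈ ({n1, n2, n3} :
        Finset {w : V // G.Adj v₃ w}) := huniv ▸ Finset.mem_univ _
    simp only [Finset.mem_insert, Finset.mem_singleton] at hmem
    rcases hmem with h | h | h
    · exact Or.inl (congrArg Subtype.val h)
    · exact Or.inr (Or.inl (congrArg Subtype.val h))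
    · exact Or.inr (Or.inr (congrArg Subtype.val h))
  set Fp := facePerm emb with hFpdef
  have hFpapp : ∀ z : (G.deleteEdges {s(v₁, v₂)}).Dart, Fp z = emb.rot z.symm := fun z => rfl
  set a3 : (G.deleteEdges {s(v₁, v₂)}).Dart := ⟨(v₃, v₁), h13'.symm⟩ with ha3
  set b3 : (G.deleteEdges {s(v₁, v₂)}).Dart := ⟨(v₃, v₂), h23'.symm⟩ with hb3
  set c3 : (G.deleteEdges {s(v₁, v₂)}).Dart := ⟨(v₃, x), h3x'⟩ with hc3'
  have hab3 : a3 ≠ b3 := by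
    intro h
    exact hne12 (congrArg (fun t => t.toProd.2) h)
  have hdart3 : ∀ z : (G.deleteEdges {s(v₁, v₂)}).Dart, z.fst = v₃ → z = a3 ∨ z = b3 ∨ z = c3 := by
    intro z hz
    have hadj : G.Adj v₃ z.snd := hz ▸ SimpleGraph.deleteEdges_le _ z.adj
    rcases hnbr _ hadj with h | h | h
    · exact Or.inl (SimpleGraph.Dart.ext _ _ (Prod.ext hz h))
    · exact Or.inr (Or.inl (SimpleGraph.Dart.ext _ _ (Prod.ext hz h)))
    · exact Or.inr (Or.inr (SimpleGraph.Dart.ext _ _ (Prod.ext hz h)))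
  have hrot_ne : ∀ z w : (G.deleteEdges {s(v₁, v₂)}).Dart, z.fst = v₃ → w.fst = v₃ → z ≠ w → emb.rot z ≠ z := by
    intro z w hz hw hzw hc
    exact hzw (sc_fixed hc (emb.star_cyc z w (hz.trans hw.symm))).symm
  obtain ⟨d, d', hdd', hd1, hd2⟩ :
      ∃ d d' : (G.deleteEdges {s(v₁, v₂)}).Dart, Fp.SameCycle d d' ∧ d.fst = v₁ ∧ d'.fst = v₂ := by
    rcases hdart3 (emb.rot a3) (emb.fst_rot a3) with hA | hA | hA
    · exact absurd hA (hrot_ne a3 b3 rfl rfl hab3)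
    · refine ⟨a3.symm, Fp (Fp a3.symm), (sc_step Fp a3.symm).trans (sc_step Fp _), rfl, ?_⟩
      have h1 : Fp a3.symm = b3 := by
        rw [hFpapp, SimpleGraph.Dart.symm_symm, hA]
      rw [h1, hFpapp]
      exact emb.fst_rot b3.symm
    · have hB : emb.rot b3 = a3 := by
        rcases hdart3 (emb.rot b3) (emb.fst_rot b3) with h | h | h
        · exact h
        · exact absurd h (hrot_ne b3 a3 rfl rfl hab3.symm)
        · exact absurd (emb.rot.injective (h.trans hA.symm)) hab3.symm
      refine ⟨Fp (Fp b3.symm), b3.symm,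
        ((sc_step Fp b3.symm).trans (sc_step Fp _)).symm, ?_, rfl⟩
      have h1 : Fp b3.symm = a3 := by
        rw [hFpapp, SimpleGraph.Dart.symm_symm, hB]
      rw [h1, hFpapp]
      exact emb.fst_rot a3.symm
  refine ⟨⟨d, d', hdd', hd1, hd2⟩, ?_⟩
  -- ===== Part 2: the modified embedding =====
  set p : G.Dart → Prop := fun z => s(z.fst, z.snd) ≠ s(v₁, v₂) with hpdef
  have hGadj : ∀ z : (G.deleteEdges {s(v₁, v₂)}).Dart, G.Adj z.toProd.1 z.toProd.2 :=
    fun z => SimpleGraph.deleteEdges_le _ z.adj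
  set j : (G.deleteEdges {s(v₁, v₂)}).Dart → G.Dart := fun z => ⟨z.toProd, hGadj z⟩ with hjdef
  have hpj : ∀ z, p (j z) := by
    intro z
    have hz := z.adj
    rw [SimpleGraph.deleteEdges_adj] at hz
    have h2 : ¬ s(z.toProd.1, z.toProd.2) = s(v₁, v₂) := by simpa using hz.2
    exact h2
  have hjinj : Function.Injective j := by
    intro u w h
    have h2 := congrArg SimpleGraph.Dart.toProd h
    exact SimpleGraph.Dart.ext _ _ h2
  have hjsymm : ∀ z, (j z).symm = j z.symm := fun z => SimpleGraph.Dart.ext _ _ rfl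
  set fEquiv : (G.deleteEdges {s(v₁, v₂)}).Dart ≃ {z : G.Dart // p z} :=
    { toFun := fun z => ⟨j z, hpj z⟩
      invFun := fun w => ⟨w.val.toProd, by
        rw [SimpleGraph.deleteEdges_adj]
        refine ⟨w.val.adj, ?_⟩
        have hw : ¬ s(w.val.toProd.1, w.val.toProd.2) = s(v₁, v₂) := w.prop
        simpa using hw⟩
      left_inv := fun z => SimpleGraph.Dart.ext _ _ rfl
      right_inv := fun w => Subtype.ext (SimpleGraph.Dart.ext _ _ rfl) } with hfEq
  set e : G.Dart := ⟨(v₁, v₂), h₁₂⟩ with hedef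
  set e' : G.Dart := ⟨(v₂, v₁), h₁₂.symm⟩ with he'def
  have hpe : ¬ p e := by rw [hpdef]; simp [hedef]
  have hpe' : ¬ p e' := by rw [hpdef]; simp [he'def, Sym2.eq_swap]
  have hjne_e : ∀ z, j z ≠ e := fun z h => hpe (h ▸ hpj z)
  have hjne_e' : ∀ z, j z ≠ e' := fun z h => hpe' (h ▸ hpj z)
  have hee' : e ≠ e' := by
    intro h
    exact hne12 (congrArg (fun t => t.toProd.1) h)
  have hesymm : e.symm = e' := SimpleGraph.Dart.ext _ _ rfl
  have he'symm : e'.symm = e := SimpleGraph.Dart.ext _ _ rfl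
  have hsymm_eq : ∀ z w : G.Dart, z.symm = w → z = w.symm := by
    intro z w h
    rw [← h, SimpleGraph.Dart.symm_symm]
  set R₀ : Equiv.Perm G.Dart := emb.rot.extendDomain fEquiv with hR₀def
  have hR₀j : ∀ z, R₀ (j z) = j (emb.rot z) := by
    intro z
    exact Equiv.Perm.extendDomain_apply_image emb.rot fEquiv z
  have hR₀e : R₀ e = e := Equiv.Perm.extendDomain_apply_not_subtype _ _ hpe
  have hR₀e' : R₀ e' = e' := Equiv.Perm.extendDomain_apply_not_subtype _ _ hpe'
  have hR₀sc : ∀ u w, emb.rot.SameCycle u w → R₀.SameCycle (j u) (j w) := by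
    intro u w h
    exact h.extendDomain (f := fEquiv)
  have hclass : ∀ z : G.Dart, (∃ u, z = j u) ∨ z = e ∨ z = e' := by
    intro z
    by_cases hz : p z
    · exact Or.inl ⟨fEquiv.symm ⟨z, hz⟩,
        (congrArg Subtype.val (fEquiv.apply_symm_apply ⟨z, hz⟩)).symm⟩
    · rw [hpdef] at hz
      simp only [ne_eq, not_not] at hz
      rw [Sym2.eq_iff] at hz
      rcases hz with ⟨h1, h2⟩ | ⟨h1, h2⟩
      · exact Or.inr (Or.inl (SimpleGraph.Dart.ext _ _ (Prod.ext h1 h2)))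
      · exact Or.inr (Or.inr (SimpleGraph.Dart.ext _ _ (Prod.ext h1 h2)))
  set a : (G.deleteEdges {s(v₁, v₂)}).Dart := emb.rot⁻¹ d with hadef
  set b : (G.deleteEdges {s(v₁, v₂)}).Dart := emb.rot⁻¹ d' with hbdef
  have hrota : emb.rot a = d := Equiv.apply_symm_apply _ _
  have hrotb : emb.rot b = d' := Equiv.apply_symm_apply _ _
  have ha1 : a.fst = v₁ := by rw [← emb.fst_rot a, hrota]; exact hd1
  have hb1 : b.fst = v₂ := by rw [← emb.fst_rot b, hrotb]; exact hd2
  have hane : a ≠ b := fun h => hne12 (by rw [← ha1, h]; exact hb1)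
  have hja_jb : j a ≠ j b := fun h => hane (hjinj h)
  have hasbs : a.symm ≠ b.symm := fun h =>
    hane (by rw [← SimpleGraph.Dart.symm_symm a, h, SimpleGraph.Dart.symm_symm])
  have hjasjbs : j a.symm ≠ j b.symm := fun h => hasbs (hjinj h)
  set R₁ := R₀ * Equiv.swap (j a) e with hR₁def
  set rot' := R₁ * Equiv.swap (j b) e' with hrot'def
  have hv1 : rot' (j a) = e := by
    rw [hrot'def, Equiv.Perm.mul_apply,
      Equiv.swap_apply_of_ne_of_ne hja_jb (hjne_e' a), hR₁def, Equiv.Perm.mul_apply,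
      Equiv.swap_apply_left, hR₀e]
  have hv2 : rot' e = j (emb.rot a) := by
    rw [hrot'def, Equiv.Perm.mul_apply,
      Equiv.swap_apply_of_ne_of_ne (Ne.symm (hjne_e b)) hee', hR₁def, Equiv.Perm.mul_apply,
      Equiv.swap_apply_right, hR₀j]
  have hv3 : rot' (j b) = e' := by
    rw [hrot'def, Equiv.Perm.mul_apply, Equiv.swap_apply_left, hR₁def, Equiv.Perm.mul_apply,
      Equiv.swap_apply_of_ne_of_ne (Ne.symm (hjne_e' a)) (Ne.symm hee'), hR₀e']
  have hv4 : rot' e' = j (emb.rot b) := by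
    rw [hrot'def, Equiv.Perm.mul_apply, Equiv.swap_apply_right, hR₁def, Equiv.Perm.mul_apply,
      Equiv.swap_apply_of_ne_of_ne hja_jb.symm (hjne_e b), hR₀j]
  have hv5 : ∀ u, u ≠ a → u ≠ b → rot' (j u) = j (emb.rot u) := by
    intro u hua hub
    rw [hrot'def, Equiv.Perm.mul_apply,
      Equiv.swap_apply_of_ne_of_ne (fun h => hub (hjinj h)) (hjne_e' u),
      hR₁def, Equiv.Perm.mul_apply,
      Equiv.swap_apply_of_ne_of_ne (fun h => hua (hjinj h)) (hjne_e u), hR₀j]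
  have hnsc1 : ¬R₀.SameCycle (j a) e := fun h => hjne_e a (sc_fixed hR₀e h.symm)
  have t1 : ∀ {z w}, R₀.SameCycle z w → R₁.SameCycle z w := by
    intro z w h
    rw [hR₁def]
    exact merge_transfer (hjne_e a) hnsc1 h
  have t1' : R₁.SameCycle (j a) e := by
    rw [hR₁def]; exact merge_sc (hjne_e a) hnsc1
  have hR₁e' : R₁ e' = e' := by
    rw [hR₁def, Equiv.Perm.mul_apply,
      Equiv.swap_apply_of_ne_of_ne (Ne.symm (hjne_e' a)) (Ne.symm hee'), hR₀e']
  have hnsc2 : ¬R₁.SameCycle (j b) e' := fun h => hjne_e' b (sc_fixed hR₁e' h.symm)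
  have t2 : ∀ {z w}, R₁.SameCycle z w → rot'.SameCycle z w := by
    intro z w h
    rw [hrot'def]
    exact merge_transfer (hjne_e' b) hnsc2 h
  have t2' : rot'.SameCycle (j b) e' := by
    rw [hrot'def]; exact merge_sc (hjne_e' b) hnsc2
  have hfst_rot' : ∀ z : G.Dart, (rot' z).fst = z.fst := by
    intro z
    rcases hclass z with ⟨u, rfl⟩ | rfl | rfl
    · by_cases hua : u = a
      · subst hua; rw [hv1]; exact ha1.symm
      · by_cases hub : u = b
        · subst hub; rw [hv3]; exact hb1.symm
        · rw [hv5 u hua hub]; exact emb.fst_rot u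
    · rw [hv2]; exact (emb.fst_rot a).trans ha1
    · rw [hv4]; exact (emb.fst_rot b).trans hb1
  have hanchor : ∀ z : G.Dart, ∃ u, rot'.SameCycle z (j u) ∧ u.fst = z.fst := by
    intro z
    rcases hclass z with ⟨u, rfl⟩ | rfl | rfl
    · exact ⟨u, Equiv.Perm.SameCycle.refl _ _, rfl⟩
    · exact ⟨a, (t2 t1').symm, ha1⟩
    · exact ⟨b, t2'.symm, hb1⟩
  have hstar' : ∀ z z' : G.Dart, z.fst = z'.fst → rot'.SameCycle z z' := by
    intro z z' h
    obtain ⟨u, hu, hufst⟩ := hanchor z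
    obtain ⟨u', hu', hufst'⟩ := hanchor z'
    have hsc : emb.rot.SameCycle u u' := emb.star_cyc u u' (by rw [hufst, hufst', h])
    exact (hu.trans (t2 (t1 (hR₀sc _ _ hsc)))).trans hu'.symm
  set emb2 : RotationSystem G := ⟨rot', hfst_rot', hstar'⟩ with hemb2
  refine ⟨emb2, ?_⟩
  -- face permutation bookkeeping
  set F₀ : Equiv.Perm G.Dart := (dartSymmPerm G).trans R₀ with hF₀def
  have hF₀app : ∀ z : G.Dart, F₀ z = R₀ z.symm := fun z => rfl
  have hAsymm' : (j a.symm).symm = j a := by rw [hjsymm, SimpleGraph.Dart.symm_symm]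
  have hBsymm' : (j b.symm).symm = j b := by rw [hjsymm, SimpleGraph.Dart.symm_symm]
  have hF₀j : ∀ u, F₀ (j u) = j (Fp u) := by
    intro u
    rw [hF₀app, hjsymm, hR₀j, hFpapp]
  have hF₀e : F₀ e = e' := by rw [hF₀app, hesymm, hR₀e']
  have hF₀e' : F₀ e' = e := by rw [hF₀app, he'symm, hR₀e]
  have hFa2 : Fp a.symm = emb.rot a := by rw [hFpapp, SimpleGraph.Dart.symm_symm]
  have hFb2 : Fp b.symm = emb.rot b := by rw [hFpapp, SimpleGraph.Dart.symm_symm]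
  have hF'eq : facePerm emb2 = (F₀ * Equiv.swap (j b.symm) e) * Equiv.swap (j a.symm) e' := by
    apply Equiv.ext
    intro z
    show rot' z.symm = F₀ (Equiv.swap (j b.symm) e (Equiv.swap (j a.symm) e' z))
    by_cases hzA : z = j a.symm
    · subst hzA
      rw [Equiv.swap_apply_left,
        Equiv.swap_apply_of_ne_of_ne (Ne.symm (hjne_e' b.symm)) (Ne.symm hee'),
        hF₀e', hAsymm', hv1]
    · by_cases hze' : z = e'
      · subst hze'
        rw [Equiv.swap_apply_right,
          Equiv.swap_apply_of_ne_of_ne hjasjbs (hjne_e a.symm),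
          hF₀j, he'symm, hv2, hFa2]
      · by_cases hzB : z = j b.symm
        · subst hzB
          rw [Equiv.swap_apply_of_ne_of_ne hjasjbs.symm (hjne_e' b.symm),
            Equiv.swap_apply_left, hF₀e, hBsymm', hv3]
        · by_cases hze : z = e
          · subst hze
            rw [Equiv.swap_apply_of_ne_of_ne (Ne.symm (hjne_e a.symm)) hee',
              Equiv.swap_apply_right, hF₀j, hesymm, hv4, hFb2]
          · rw [Equiv.swap_apply_of_ne_of_ne hzA hze',
              Equiv.swap_apply_of_ne_of_ne hzB hze, hF₀app,
              hrot'def, Equiv.Perm.mul_apply,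
              Equiv.swap_apply_of_ne_of_ne
                (fun hc => hzB ((hsymm_eq _ _ hc).trans (hjsymm b)))
                (fun hc => hze ((hsymm_eq _ _ hc).trans he'symm)),
              hR₁def, Equiv.Perm.mul_apply,
              Equiv.swap_apply_of_ne_of_ne
                (fun hc => hzA ((hsymm_eq _ _ hc).trans (hjsymm a)))
                (fun hc => hze' ((hsymm_eq _ _ hc).trans hesymm))]
  -- orbit transfer between Fp and F₀
  have hF₀pow : ∀ (n : ℕ) u, (F₀^n) (j u) = j ((Fp^n) u) := by
    intro n
    induction n with
    | zero => intro u; simp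
    | succ n ih =>
      intro u
      rw [pow_succ', Equiv.Perm.mul_apply, ih u, hF₀j, pow_succ', Equiv.Perm.mul_apply]
  have hF₀powe : ∀ n : ℕ, (F₀^n) e = e ∨ (F₀^n) e = e' := by
    intro n
    induction n with
    | zero => exact Or.inl (by simp)
    | succ n ih =>
      rw [pow_succ', Equiv.Perm.mul_apply]
      rcases ih with h | h
      · rw [h, hF₀e]; exact Or.inr rfl
      · rw [h, hF₀e']; exact Or.inl rfl
  have hscj : ∀ (u) (w : G.Dart), F₀.SameCycle (j u) w → ∃ u', w = j u' ∧ Fp.SameCycle u u' := by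
    intro u w h
    obtain ⟨n, -, hn⟩ := h.exists_pow_eq'
    exact ⟨(Fp^n) u, by rw [← hn, hF₀pow], ⟨(n : ℤ), by rw [zpow_natCast]⟩⟩
  have hsce : ∀ w, F₀.SameCycle e w → w = e ∨ w = e' := by
    intro w h
    obtain ⟨n, -, hn⟩ := h.exists_pow_eq'
    rcases hF₀powe n with h' | h'
    · exact Or.inl (by rw [← hn, h'])
    · exact Or.inr (by rw [← hn, h'])
  have hscj' : ∀ u u', Fp.SameCycle u u' → F₀.SameCycle (j u) (j u') := by
    intro u u' h
    obtain ⟨n, -, hn⟩ := h.exists_pow_eq'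
    exact ⟨(n : ℤ), by rw [zpow_natCast, hF₀pow, hn]⟩
  have hsymmj2 : ∀ (u) (hu : p (j u)), fEquiv.symm ⟨j u, hu⟩ = u := by
    intro u hu
    have h0 : fEquiv u = ⟨j u, hu⟩ := Subtype.ext rfl
    rw [← h0, Equiv.symm_apply_apply]
  have c₀ : Nat.card (Quotient (Equiv.Perm.SameCycle.setoid Fp)) + 1
      ≤ Nat.card (Quotient (Equiv.Perm.SameCycle.setoid F₀)) := by
    set g : G.Dart → (Quotient (Equiv.Perm.SameCycle.setoid Fp)) ⊕ Unit := fun z =>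
      if hz : p z then Sum.inl (Quotient.mk _ (fEquiv.symm ⟨z, hz⟩)) else Sum.inr () with hg
    have wd : ∀ z w : G.Dart, (Equiv.Perm.SameCycle.setoid F₀).r z w → g z = g w := by
      intro z w h
      by_cases hz : p z
      · obtain ⟨u, hzu⟩ : ∃ u, z = j u := ⟨fEquiv.symm ⟨z, hz⟩,
          (congrArg Subtype.val (fEquiv.apply_symm_apply ⟨z, hz⟩)).symm⟩
        subst hzu
        obtain ⟨u', rfl, hsc⟩ := hscj u w h
        rw [hg]
        beta_reduce
        rw [dif_pos (hpj u), dif_pos (hpj u'), hsymmj2, hsymmj2]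
        exact congrArg Sum.inl (Quotient.sound hsc)
      · have hwe : w = e ∨ w = e' := by
          rcases hclass z with ⟨u, rfl⟩ | rfl | rfl
          · exact absurd (hpj u) hz
          · exact hsce w h
          · refine hsce w (Equiv.Perm.SameCycle.trans ?_ h)
            exact ⟨1, by rw [zpow_one, hF₀e]⟩
        have hw : ¬ p w := by
          rcases hwe with rfl | rfl
          · exact hpe
          · exact hpe'
        rw [hg]
        beta_reduce
        rw [dif_neg hz, dif_neg hw]
    have surj : Function.Surjective (Quotient.lift g wd) := by
      rintro (q | u)
      · obtain ⟨u, rfl⟩ := q.exists_rep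
        refine ⟨Quotient.mk _ (j u), ?_⟩
        show g (j u) = _
        rw [hg]
        beta_reduce
        rw [dif_pos (hpj u), hsymmj2]
      · refine ⟨Quotient.mk _ e, ?_⟩
        show g e = _
        rw [hg]
        beta_reduce
        rw [dif_neg hpe]
    calc Nat.card (Quotient (Equiv.Perm.SameCycle.setoid Fp)) + 1
        = Nat.card ((Quotient (Equiv.Perm.SameCycle.setoid Fp)) ⊕ Unit) := by
          rw [Nat.card_sum]; simp
      _ ≤ Nat.card (Quotient (Equiv.Perm.SameCycle.setoid F₀)) :=
          Nat.card_le_card_of_surjective _ surj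
  have hBe : ¬F₀.SameCycle (j b.symm) e := by
    intro h
    rcases hsce _ h.symm with hc | hc
    · exact hjne_e b.symm hc
    · exact hjne_e' b.symm hc
  have hc1 := count_merge (hjne_e b.symm) hBe
  have hscab : Fp.SameCycle a.symm b.symm := by
    have s1 : Fp.SameCycle a.symm d := (hFa2.trans hrota) ▸ sc_step Fp a.symm
    have s2 : Fp.SameCycle b.symm d' := (hFb2.trans hrotb) ▸ sc_step Fp b.symm
    exact (s1.trans hdd').trans s2.symm
  have hAB : F₀.SameCycle (j a.symm) (j b.symm) := hscj' _ _ hscab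
  have hA_e' : (F₀ * Equiv.swap (j b.symm) e).SameCycle (j a.symm) e' := by
    have hstep : (F₀ * Equiv.swap (j b.symm) e) (j b.symm) = e' := by
      rw [Equiv.Perm.mul_apply, Equiv.swap_apply_left, hF₀e]
    have h1 := merge_transfer (hjne_e b.symm) hBe hAB
    exact h1.trans (hstep ▸ sc_step _ (j b.symm))
  have hc2 := count_split (hjne_e' a.symm) hA_e'
  have hface : Nat.card (Quotient (Equiv.Perm.SameCycle.setoid Fp)) + 1
      ≤ Nat.card (Quotient (Equiv.Perm.SameCycle.setoid (facePerm emb2))) := by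
    rw [hF'eq]
    omega
  -- isolated vertices
  have hIso : Nat.card {v : V // ∀ dd : G.Dart, dd.fst ≠ v}
      = Nat.card {v : V // ∀ dd : (G.deleteEdges {s(v₁, v₂)}).Dart, dd.fst ≠ v} := by
    apply Nat.card_congr
    apply Equiv.subtypeEquivRight
    intro v
    constructor
    · intro h dd; exact h (j dd)
    · intro h dd hfst
      rcases hclass dd with ⟨u, rfl⟩ | rfl | rfl
      · exact h u hfst
      · exact h ⟨(v₁, v₃), h13'⟩ hfst
      · exact h ⟨(v₂, v₃), h23'⟩ hfst
  -- edges
  have hE : Nat.card ↥((G.deleteEdges {s(v₁, v₂)}).edgeSet) + 1 = Nat.card ↥G.edgeSet := by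
    rw [SimpleGraph.edgeSet_deleteEdges, Nat.card_coe_set_eq, Nat.card_coe_set_eq]
    exact Set.ncard_diff_singleton_add_one h₁₂ (Set.toFinite _)
  -- connected components
  have hreach : ∀ u w : V, G.Adj u w → (G.deleteEdges {s(v₁, v₂)}).Reachable u w := by
    intro u w huw
    by_cases hc : s(u, w) = s(v₁, v₂)
    · have hr : (G.deleteEdges {s(v₁, v₂)}).Reachable v₁ v₂ :=
        (h13'.reachable).trans (h23'.symm.reachable)
      rw [Sym2.eq_iff] at hc
      rcases hc with ⟨rfl, rfl⟩ | ⟨rfl, rfl⟩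
      · exact hr
      · exact hr.symm
    · refine SimpleGraph.Adj.reachable ?_
      rw [SimpleGraph.deleteEdges_adj]
      exact ⟨huw, by simpa using hc⟩
  have hwalk : ∀ (u w : V), G.Walk u w →
      (G.deleteEdges {s(v₁, v₂)}).connectedComponentMk u
        = (G.deleteEdges {s(v₁, v₂)}).connectedComponentMk w := by
    intro u w pw
    induction pw with
    | nil => rfl
    | cons h q ih => exact (SimpleGraph.ConnectedComponent.sound (hreach _ _ h)).trans ih
  have hCC : Nat.card G.ConnectedComponent
      = Nat.card (G.deleteEdges {s(v₁, v₂)}).ConnectedComponent := by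
    apply Nat.card_congr
    refine ⟨SimpleGraph.ConnectedComponent.lift
        (fun v => (G.deleteEdges {s(v₁, v₂)}).connectedComponentMk v)
        (fun u w pw _ => hwalk u w pw),
      SimpleGraph.ConnectedComponent.map
        (SimpleGraph.Hom.ofLE (SimpleGraph.deleteEdges_le _)), ?_, ?_⟩
    · apply SimpleGraph.ConnectedComponent.ind
      intro v
      rfl
    · apply SimpleGraph.ConnectedComponent.ind
      intro v
      rfl
  -- assemble
  have hfaces2 : numFaces emb + 1 ≤ numFaces emb2 := by
    have h1 : numFaces emb2 = Nat.card (Quotient (Equiv.Perm.SameCycle.setoid (facePerm emb2)))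
        + Nat.card {v : V // ∀ dd : G.Dart, dd.fst ≠ v} := rfl
    have h2 : numFaces emb = Nat.card (Quotient (Equiv.Perm.SameCycle.setoid Fp))
        + Nat.card {v : V // ∀ dd : (G.deleteEdges {s(v₁, v₂)}).Dart, dd.fst ≠ v} := rfl
    rw [h1, h2, hIso]
    omega
  unfold eulerDefect
  rw [hCC]
  have hE' : (Nat.card ↥((G.deleteEdges {s(v₁, v₂)}).edgeSet) : ℤ) + 1
      = (Nat.card ↥G.edgeSet : ℤ) := by exact_mod_cast hE
  have hf' : (numFaces emb : ℤ) + 1 ≤ (numFaces emb2 : ℤ) := by exact_mod_cast hfaces2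
  linarith
end

section
/- A cubic graph that is irreducible for an orientable surface S_k (every proper subgraph embeds in S_k but G does not) contains no triangle. -/
open SimpleGraph

/-- `G` embeds in the orientable surface `S_k` of genus `k`: it has a rotation system
whose total genus, given by Euler's formula, is at most `k`. -/
def EmbedsInGenus {V : Type*} (G : SimpleGraph V) (k : ℕ) : Prop :=
  ∃ R : RotationSystem G, eulerDefect R ≤ 2 * k

/-- `G` is irreducible for the surface `S_k`: `G` does not embed in `S_k`, but every
proper subgraph of `G` does. -/
def IrreducibleForSurface {V : Type*} (G : SimpleGraph V) (k : ℕ) : Prop :=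
  ¬ EmbedsInGenus G k ∧ ∀ H : SimpleGraph V, H ≤ G → H ≠ G → EmbedsInGenus H k

section Aux

open Equiv Equiv.Perm

/-- A function constant along single steps of a permutation is constant on cycles. -/
private lemma const_of_step {α β : Type*} (σ : Equiv.Perm α) (F : α → β)
    (h : ∀ x, F (σ x) = F x) : ∀ (n : ℤ) (x : α), F ((σ ^ n) x) = F x := by
  intro n
  induction n using Int.induction_on with
  | zero => intro x; simp
  | succ n ih =>
      intro x
      rw [zpow_add_one, Equiv.Perm.mul_apply, ih (σ x), h x]
  | pred n ih =>
      intro x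
      rw [zpow_sub_one, Equiv.Perm.mul_apply, ih (σ⁻¹ x)]
      have := h (σ⁻¹ x)
      rw [Equiv.Perm.coe_inv, Equiv.apply_symm_apply] at this
      exact this.symm

private lemma const_of_step' {α β : Type*} (σ : Equiv.Perm α) (F : α → β)
    (h : ∀ x, F (σ x) = F x) {a b : α} (hab : σ.SameCycle a b) : F a = F b := by
  obtain ⟨n, rfl⟩ := hab
  exact (const_of_step σ F h n a).symm

/-- Transport of the same-cycle relation along a map intertwining two permutations
up to `SameCycle`. -/
private lemma sameCycle_map {α β : Type*} (σ : Equiv.Perm α) (τ : Equiv.Perm β) (g : α → β)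
    (hstep : ∀ x, τ.SameCycle (g x) (g (σ x))) :
    ∀ (n : ℤ) (x : α), τ.SameCycle (g x) (g ((σ ^ n) x)) := by
  intro n
  induction n using Int.induction_on with
  | zero => intro x; simpa using Equiv.Perm.SameCycle.refl τ (g x)
  | succ n ih =>
      intro x
      rw [zpow_add_one, Equiv.Perm.mul_apply]
      exact (hstep x).trans (ih (σ x))
  | pred n ih =>
      intro x
      rw [zpow_sub_one, Equiv.Perm.mul_apply]
      have h2 : τ.SameCycle (g (σ⁻¹ x)) (g x) := by
        have := hstep (σ⁻¹ x)
        rwa [Equiv.Perm.coe_inv, Equiv.apply_symm_apply] at this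
      exact h2.symm.trans (ih (σ⁻¹ x))

/-- Membership in a forward-invariant set propagates along cycles (finite case). -/
private lemma mem_closed {α : Type*} [Finite α] (σ : Equiv.Perm α) (S : Set α)
    (hmap : ∀ x ∈ S, σ x ∈ S) {x y : α} (hx : x ∈ S) (h : σ.SameCycle x y) : y ∈ S := by
  obtain ⟨i, -, rfl⟩ := h.exists_pow_eq'
  clear h
  induction i generalizing x with
  | zero => simpa using hx
  | succ n ih =>
      rw [pow_succ, Equiv.Perm.mul_apply]
      exact ih (hmap x hx)

/-- From a rotation taking `p` directly to `q` produce two darts on a common face whose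
heads are `p.snd` and `q.snd` respectively. -/
private lemma exists_darts {V : Type*} {H : SimpleGraph V} (R : RotationSystem H)
    (p q : H.Dart) (h : R.rot p = q) :
    ∃ d₁ d₂ : H.Dart, (facePerm R).SameCycle d₁ d₂ ∧ d₁.snd = p.snd ∧ d₂.snd = q.snd := by
  refine ⟨(R.rot.symm p.symm).symm, q, ?_, ?_, rfl⟩
  · have e1 : facePerm R ((R.rot.symm p.symm).symm) = p.symm := by
      show R.rot ((R.rot.symm p.symm).symm).symm = p.symm
      rw [SimpleGraph.Dart.symm_symm, Equiv.apply_symm_apply]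
    have e2 : facePerm R p.symm = q := by
      show R.rot p.symm.symm = q
      rw [SimpleGraph.Dart.symm_symm, h]
    have c1 := (Equiv.Perm.SameCycle.refl (facePerm R) ((R.rot.symm p.symm).symm)).apply_right
    rw [e1] at c1
    have c2 := (Equiv.Perm.SameCycle.refl (facePerm R) p.symm).apply_right
    rw [e2] at c2
    exact c1.trans c2
  · show (R.rot.symm p.symm).fst = p.snd
    have h := R.fst_rot (R.rot.symm p.symm)
    rw [Equiv.apply_symm_apply] at h
    exact h.symm

/-- The key splicing lemma: if `G` is `H` plus one extra edge `uw`, and some face of an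
embedding of `H` passes through both `u` and `w`, then `G` has an embedding with Euler
defect at most that of `H`. -/
private lemma splice {V : Type*} [Fintype V] {G H : SimpleGraph V} (hle : H ≤ G)
    {u w : V} (huw : G.Adj u w) (hnadj : ¬ H.Adj u w)
    (hrest : ∀ a b : V, G.Adj a b → s(a, b) ≠ s(u, w) → H.Adj a b)
    (R : RotationSystem H) (d₁ d₂ : H.Dart)
    (hsc : (facePerm R).SameCycle d₁ d₂) (h1 : d₁.snd = u) (h2 : d₂.snd = w) :
    ∃ R' : RotationSystem G, eulerDefect R' ≤ eulerDefect R := by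
  classical
  haveI : Finite G.Dart := Finite.of_injective _ (Dart.toProd_injective (G := G))
  haveI : Finite H.Dart := Finite.of_injective _ (Dart.toProd_injective (G := H))
  have hune : u ≠ w := huw.ne
  -- the inclusion of darts
  set ι : H.Dart → G.Dart := fun h => ⟨h.toProd, hle h.adj⟩ with hι
  have hιinj : Function.Injective ι := by
    intro a b hab
    have h2 : (ι a).toProd = (ι b).toProd := congrArg Dart.toProd hab
    exact Dart.ext a b h2
  set dp : G.Dart := ⟨(u, w), huw⟩ with hdp
  set dm : G.Dart := ⟨(w, u), huw.symm⟩ with hdm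
  have hdpm : dp ≠ dm := by
    intro e
    exact hune (congrArg (fun d => d.toProd.1) e)
  have hNp : ∀ h : H.Dart, ι h ≠ dp := by
    intro h e
    have e2 : (ι h).toProd = dp.toProd := congrArg Dart.toProd e
    have e3 : h.toProd = (u, w) := e2
    have := h.adj
    rw [e3] at this
    exact hnadj this
  have hNm : ∀ h : H.Dart, ι h ≠ dm := by
    intro h e
    have e2 : (ι h).toProd = dm.toProd := congrArg Dart.toProd e
    have e3 : h.toProd = (w, u) := e2
    have := h.adj
    rw [e3] at this
    exact hnadj this.symm
  set P : G.Dart → Prop := fun d => d ≠ dp ∧ d ≠ dm with hP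
  -- the equivalence between darts of H and darts of G other than the two new ones
  have hinv : ∀ d : G.Dart, P d → H.Adj d.toProd.1 d.toProd.2 := by
    intro d hd
    refine hrest _ _ d.adj (fun e => ?_)
    rcases Sym2.eq_iff.mp e with ⟨ha, hb⟩ | ⟨ha, hb⟩
    · exact hd.1 (Dart.ext _ _ (Prod.ext ha hb))
    · exact hd.2 (Dart.ext _ _ (Prod.ext ha hb))
  set f : H.Dart ≃ {d : G.Dart // P d} :=
    { toFun := fun h => ⟨ι h, hNp h, hNm h⟩
      invFun := fun d => ⟨d.1.toProd, hinv d.1 d.2⟩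
      left_inv := fun h => Dart.ext _ _ rfl
      right_inv := fun d => Subtype.ext (Dart.ext _ _ rfl) } with hf
  set s₁ : H.Dart := d₁.symm with hs₁
  set s₂ : H.Dart := d₂.symm with hs₂
  have hs₁fst : s₁.fst = u := h1
  have hs₂fst : s₂.fst = w := h2
  have hss : s₁ ≠ s₂ := by
    intro e
    exact hune (by rw [← hs₁fst, e, hs₂fst])
  have hrr : R.rot s₁ ≠ R.rot s₂ := fun e => hss (R.rot.injective e)
  have hAB : ι (R.rot s₁) ≠ ι (R.rot s₂) := fun e => hrr (hιinj e)
  set ρ : Equiv.Perm G.Dart := R.rot.extendDomain f with hρ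
  set rot'0 : Equiv.Perm G.Dart :=
    ρ.trans ((Equiv.swap (ι (R.rot s₁)) dp).trans (Equiv.swap (ι (R.rot s₂)) dm)) with hrot'
  have hρι : ∀ h : H.Dart, ρ (ι h) = ι (R.rot h) := by
    intro h
    exact Equiv.Perm.extendDomain_apply_image R.rot f h
  have hρp : ρ dp = dp := Equiv.Perm.extendDomain_apply_not_subtype _ _ (fun hc => hc.1 rfl)
  have hρm : ρ dm = dm := Equiv.Perm.extendDomain_apply_not_subtype _ _ (fun hc => hc.2 rfl)
  have e₀ : ∀ h : H.Dart, h ≠ s₁ → h ≠ s₂ → rot'0 (ι h) = ι (R.rot h) := by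
    intro h hh₁ hh₂
    show Equiv.swap (ι (R.rot s₂)) dm (Equiv.swap (ι (R.rot s₁)) dp (ρ (ι h))) = ι (R.rot h)
    rw [hρι, Equiv.swap_apply_of_ne_of_ne (fun e => hh₁ (R.rot.injective (hιinj e))) (hNp _),
      Equiv.swap_apply_of_ne_of_ne (fun e => hh₂ (R.rot.injective (hιinj e))) (hNm _)]
  have e₁ : rot'0 (ι s₁) = dp := by
    show Equiv.swap (ι (R.rot s₂)) dm (Equiv.swap (ι (R.rot s₁)) dp (ρ (ι s₁))) = dp
    rw [hρι, Equiv.swap_apply_left,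
      Equiv.swap_apply_of_ne_of_ne (fun e => hNp _ e.symm) hdpm]
  have e₂ : rot'0 (ι s₂) = dm := by
    show Equiv.swap (ι (R.rot s₂)) dm (Equiv.swap (ι (R.rot s₁)) dp (ρ (ι s₂))) = dm
    rw [hρι, Equiv.swap_apply_of_ne_of_ne (fun e => hAB e.symm) (hNp _), Equiv.swap_apply_left]
  have e₃ : rot'0 dp = ι (R.rot s₁) := by
    show Equiv.swap (ι (R.rot s₂)) dm (Equiv.swap (ι (R.rot s₁)) dp (ρ dp)) = ι (R.rot s₁)
    rw [hρp, Equiv.swap_apply_right, Equiv.swap_apply_of_ne_of_ne hAB (hNm _)]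
  have e₄ : rot'0 dm = ι (R.rot s₂) := by
    show Equiv.swap (ι (R.rot s₂)) dm (Equiv.swap (ι (R.rot s₁)) dp (ρ dm)) = ι (R.rot s₂)
    rw [hρm, Equiv.swap_apply_of_ne_of_ne (fun e => hNm _ e.symm) (fun e => hdpm e.symm),
      Equiv.swap_apply_right]
  have hclass : ∀ d : G.Dart, d = dp ∨ d = dm ∨ ∃ h : H.Dart, d = ι h := by
    intro d
    by_cases h₁ : d = dp
    · exact Or.inl h₁
    by_cases h₂ : d = dm
    · exact Or.inr (Or.inl h₂)
    refine Or.inr (Or.inr ⟨f.symm ⟨d, h₁, h₂⟩, ?_⟩)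
    exact (congrArg Subtype.val (f.apply_symm_apply ⟨d, h₁, h₂⟩)).symm
  -- the new rotation system
  have fst_rot' : ∀ d : G.Dart, (rot'0 d).fst = d.fst := by
    intro d
    rcases hclass d with rfl | rfl | ⟨h, rfl⟩
    · rw [e₃]
      show (R.rot s₁).fst = u
      rw [R.fst_rot]; exact hs₁fst
    · rw [e₄]
      show (R.rot s₂).fst = w
      rw [R.fst_rot]; exact hs₂fst
    · by_cases hh₁ : h = s₁
      · subst hh₁; rw [e₁]
        show u = (ι s₁).fst
        exact hs₁fst.symm
      by_cases hh₂ : h = s₂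
      · subst hh₂; rw [e₂]
        show w = (ι s₂).fst
        exact hs₂fst.symm
      · rw [e₀ h hh₁ hh₂]
        show (R.rot h).fst = h.fst
        exact R.fst_rot h
  have hstep_rot : ∀ h : H.Dart, rot'0.SameCycle (ι h) (ι (R.rot h)) := by
    intro h
    by_cases hh₁ : h = s₁
    · subst hh₁
      have c1 := (Equiv.Perm.SameCycle.refl rot'0 (ι s₁)).apply_right
      rw [e₁] at c1
      have c2 := (Equiv.Perm.SameCycle.refl rot'0 dp).apply_right
      rw [e₃] at c2
      exact c1.trans c2
    by_cases hh₂ : h = s₂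
    · subst hh₂
      have c1 := (Equiv.Perm.SameCycle.refl rot'0 (ι s₂)).apply_right
      rw [e₂] at c1
      have c2 := (Equiv.Perm.SameCycle.refl rot'0 dm).apply_right
      rw [e₄] at c2
      exact c1.trans c2
    · have c := (Equiv.Perm.SameCycle.refl rot'0 (ι h)).apply_right
      rwa [e₀ h hh₁ hh₂] at c
  have htrans : ∀ {a b : H.Dart}, R.rot.SameCycle a b → rot'0.SameCycle (ι a) (ι b) := by
    rintro a b ⟨n, rfl⟩
    exact sameCycle_map R.rot rot'0 ι hstep_rot n a
  have anchor : ∀ d : G.Dart, ∃ h : H.Dart, rot'0.SameCycle d (ι h) ∧ h.fst = d.fst := by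
    intro d
    rcases hclass d with rfl | rfl | ⟨h, rfl⟩
    · refine ⟨R.rot s₁, ?_, ?_⟩
      · have c := (Equiv.Perm.SameCycle.refl rot'0 dp).apply_right
        rwa [e₃] at c
      · show (R.rot s₁).fst = u
        rw [R.fst_rot]; exact hs₁fst
    · refine ⟨R.rot s₂, ?_, ?_⟩
      · have c := (Equiv.Perm.SameCycle.refl rot'0 dm).apply_right
        rwa [e₄] at c
      · show (R.rot s₂).fst = w
        rw [R.fst_rot]; exact hs₂fst
    · exact ⟨h, Equiv.Perm.SameCycle.refl _ _, rfl⟩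
  have star_cyc' : ∀ d d' : G.Dart, d.fst = d'.fst → rot'0.SameCycle d d' := by
    intro d d' hfst
    obtain ⟨h, hc, hf⟩ := anchor d
    obtain ⟨h', hc', hf'⟩ := anchor d'
    exact hc.trans ((htrans (R.star_cyc h h' (by rw [hf, hf', hfst]))).trans hc'.symm)
  set R' : RotationSystem G := ⟨rot'0, fst_rot', star_cyc'⟩ with hR'
  -- face permutations
  set φ : Equiv.Perm H.Dart := facePerm R with hφdef
  set φ' : Equiv.Perm G.Dart := facePerm R' with hφ'def
  have hφapp : ∀ h : H.Dart, φ h = R.rot h.symm := fun _ => rfl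
  have hφ'app : ∀ d : G.Dart, φ' d = rot'0 d.symm := fun _ => rfl
  have hιs : ∀ h : H.Dart, (ι h).symm = ι h.symm := fun _ => rfl
  have f₁ : φ' (ι d₁) = dp := by rw [hφ'app, hιs]; exact e₁
  have f₂ : φ' (ι d₂) = dm := by rw [hφ'app, hιs]; exact e₂
  have f₃ : φ' dp = ι (φ d₂) := by
    rw [hφ'app]
    show rot'0 dm = ι (φ d₂)
    rw [e₄, hφapp]
  have f₄ : φ' dm = ι (φ d₁) := by
    rw [hφ'app]
    show rot'0 dp = ι (φ d₁)
    rw [e₃, hφapp]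
  have f₀ : ∀ h : H.Dart, h ≠ d₁ → h ≠ d₂ → φ' (ι h) = ι (φ h) := by
    intro h hh₁ hh₂
    rw [hφ'app, hιs, hφapp]
    refine e₀ h.symm (fun e => hh₁ ?_) (fun e => hh₂ ?_)
    · rw [← Dart.symm_symm h, e, hs₁, Dart.symm_symm]
    · rw [← Dart.symm_symm h, e, hs₂, Dart.symm_symm]
  have hd12 : d₁ ≠ d₂ := by
    intro e
    exact hune (by rw [← h1, e, h2])
  -- the minimal return time
  obtain ⟨i, hi0, -, hi⟩ := hsc.exists_pow_eq''
  have hPex : ∃ n : ℕ, 0 < n ∧ ((φ ^ n) d₁ = d₁ ∨ (φ ^ n) d₁ = d₂) := ⟨i, hi0, Or.inr hi⟩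
  set m : ℕ := Nat.find hPex with hmdef
  have hm := Nat.find_spec hPex
  have hmpos : 0 < m := hm.1
  have hmd₂ : (φ ^ m) d₁ = d₂ := by
    rcases hm.2 with hfix | h
    · exfalso
      have hq : ∀ q : ℕ, ((φ ^ m) ^ q) d₁ = d₁ := by
        intro q
        induction q with
        | zero => simp
        | succ n ih => rw [pow_succ, Equiv.Perm.mul_apply, hfix, ih]
      have hr : (φ ^ (i % m)) d₁ = d₂ := by
        have hsplit : φ ^ i = φ ^ (i % m) * (φ ^ m) ^ (i / m) := by
          rw [← pow_mul, ← pow_add, Nat.mod_add_div]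
        rw [hsplit, Equiv.Perm.mul_apply, hq] at hi
        exact hi
      have hrm : i % m < m := Nat.mod_lt _ hmpos
      have hr0 : 0 < i % m := by
        rcases Nat.eq_zero_or_pos (i % m) with h0 | h0
        · rw [h0, pow_zero] at hr
          exact absurd hr hd12
        · exact h0
      exact Nat.find_min hPex hrm ⟨hr0, Or.inr hr⟩
    · exact h
  have hml : ∀ j : ℕ, 0 < j → j < m → (φ ^ j) d₁ ≠ d₁ ∧ (φ ^ j) d₁ ≠ d₂ := by
    intro j hj0 hjm
    constructor
    · intro e; exact Nat.find_min hPex hjm ⟨hj0, Or.inl e⟩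
    · intro e; exact Nat.find_min hPex hjm ⟨hj0, Or.inr e⟩
  -- the forward-invariant set containing the orbit of dm
  set S : Set G.Dart := insert dm {d | ∃ j : ℕ, 0 < j ∧ j ≤ m ∧ d = ι ((φ ^ j) d₁)} with hS
  have hmap : ∀ x ∈ S, φ' x ∈ S := by
    rintro x (rfl | ⟨j, hj0, hjm, rfl⟩)
    · rw [f₄]
      exact Or.inr ⟨1, one_pos, hmpos, by rw [pow_one]⟩
    · rcases eq_or_lt_of_le hjm with rfl | hlt
      · rw [hmd₂, f₂]
        exact Or.inl rfl
      · have hne := hml j hj0 hlt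
        rw [f₀ _ hne.1 hne.2]
        refine Or.inr ⟨j + 1, Nat.succ_pos _, hlt, ?_⟩
        rw [pow_succ' φ j, Equiv.Perm.mul_apply]
  have hιd₁S : ι d₁ ∉ S := by
    rintro (h | ⟨j, hj0, hjm, hj⟩)
    · exact hNm d₁ h
    · have he : d₁ = (φ ^ j) d₁ := hιinj hj
      rcases eq_or_lt_of_le hjm with rfl | hlt
      · exact hd12 (he.trans hmd₂)
      · exact (hml j hj0 hlt).1 he.symm
  have hnsc : ¬ φ'.SameCycle dm (ι d₁) := fun hc =>
    hιd₁S (mem_closed φ' S hmap (Set.mem_insert _ _) hc)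
  have hSorb : ∀ h : H.Dart, φ'.SameCycle dm (ι h) → φ.SameCycle d₁ h := by
    intro h hc
    rcases mem_closed φ' S hmap (Set.mem_insert _ _) hc with h' | ⟨j, -, -, hj⟩
    · exact absurd h' (hNm h)
    · have he : h = (φ ^ j) d₁ := hιinj hj
      exact ⟨(j : ℤ), by rw [zpow_natCast, ← he]⟩
  -- the projection back to darts of H
  set π : G.Dart → H.Dart := fun d =>
    if hd : ∃ h : H.Dart, d = ι h then hd.choose else if d = dp then d₁ else d₂ with hπ
  have hπι : ∀ h : H.Dart, π (ι h) = h := by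
    intro h
    have hd : ∃ h' : H.Dart, ι h = ι h' := ⟨h, rfl⟩
    show (if hd' : ∃ h' : H.Dart, ι h = ι h' then hd'.choose else if ι h = dp then d₁ else d₂) = h
    rw [dif_pos hd]
    exact (hιinj hd.choose_spec).symm
  have hπp : π dp = d₁ := by
    have hd : ¬ ∃ h : H.Dart, dp = ι h := by rintro ⟨h, e⟩; exact hNp h e.symm
    show (if hd' : ∃ h : H.Dart, dp = ι h then hd'.choose else if dp = dp then d₁ else d₂) = d₁
    rw [dif_neg hd, if_pos rfl]
  have hπm : π dm = d₂ := by
    have hd : ¬ ∃ h : H.Dart, dm = ι h := by rintro ⟨h, e⟩; exact hNm h e.symm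
    show (if hd' : ∃ h : H.Dart, dm = ι h then hd'.choose else if dm = dp then d₁ else d₂) = d₂
    rw [dif_neg hd, if_neg (fun e => hdpm e.symm)]
  -- the comparison function for counting faces
  set Fn : G.Dart → Quotient (Equiv.Perm.SameCycle.setoid φ) ⊕ Unit := fun d =>
    if φ'.SameCycle dm d then Sum.inr ()
    else Sum.inl (Quotient.mk (Equiv.Perm.SameCycle.setoid φ) (π d)) with hFn
  have honestep : ∀ x : G.Dart, Fn (φ' x) = Fn x := by
    intro x
    by_cases hx : φ'.SameCycle dm x
    · have hx2 : φ'.SameCycle dm (φ' x) := hx.apply_right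
      simp only [hFn, if_pos hx, if_pos hx2]
    · have hx2 : ¬ φ'.SameCycle dm (φ' x) := fun hc => hx hc.of_apply_right
      simp only [hFn, if_neg hx, if_neg hx2]
      congr 1
      apply Quot.sound
      show φ.SameCycle (π (φ' x)) (π x)
      rcases hclass x with rfl | rfl | ⟨h, rfl⟩
      · rw [f₃, hπι, hπp]
        exact (hsc.trans (Equiv.Perm.SameCycle.refl φ d₂).apply_right).symm
      · exact absurd (Equiv.Perm.SameCycle.refl φ' dm) hx
      · by_cases hh₁ : h = d₁
        · subst hh₁
          rw [f₁, hπp, hπι]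
        · by_cases hh₂ : h = d₂
          · exfalso
            apply hx2
            subst hh₂
            rw [f₂]
          · rw [f₀ h hh₁ hh₂, hπι, hπι]
            exact ((Equiv.Perm.SameCycle.refl φ h).apply_right).symm
  set Fbar : Quotient (Equiv.Perm.SameCycle.setoid φ') →
      Quotient (Equiv.Perm.SameCycle.setoid φ) ⊕ Unit :=
    Quotient.lift Fn (fun a b hab => const_of_step' φ' Fn honestep hab) with hFbar
  have hFbar_mk : ∀ x : G.Dart,
      Fbar (Quotient.mk (Equiv.Perm.SameCycle.setoid φ') x) = Fn x := fun _ => rfl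
  have hFsurj : Function.Surjective Fbar := by
    rintro (q | u)
    · obtain ⟨h, rfl⟩ := Quotient.exists_rep q
      by_cases hh : φ'.SameCycle dm (ι h)
      · refine ⟨Quotient.mk (Equiv.Perm.SameCycle.setoid φ') (ι d₁), ?_⟩
        rw [hFbar_mk]
        simp only [hFn, if_neg hnsc, hπι]
        congr 1
        exact Quot.sound (hSorb h hh)
      · refine ⟨Quotient.mk (Equiv.Perm.SameCycle.setoid φ') (ι h), ?_⟩
        rw [hFbar_mk]
        simp only [hFn, if_neg hh, hπι]
    · rcases u
      refine ⟨Quotient.mk (Equiv.Perm.SameCycle.setoid φ') dm, ?_⟩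
      rw [hFbar_mk]
      simp only [hFn, if_pos (Equiv.Perm.SameCycle.refl φ' dm)]
  haveI : Finite (Quotient (Equiv.Perm.SameCycle.setoid φ')) := Quotient.finite _
  haveI : Finite (Quotient (Equiv.Perm.SameCycle.setoid φ)) := Quotient.finite _
  have hcount : Nat.card (Quotient (Equiv.Perm.SameCycle.setoid φ)) + 1 ≤
      Nat.card (Quotient (Equiv.Perm.SameCycle.setoid φ')) := by
    have hcard := Nat.card_le_card_of_surjective Fbar hFsurj
    have hu : Nat.card Unit = 1 := Nat.card_unique
    rwa [Nat.card_sum, hu] at hcard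
  have hiso : Nat.card {v : V // ∀ d : G.Dart, d.fst ≠ v} =
      Nat.card {v : V // ∀ d : H.Dart, d.fst ≠ v} := by
    apply Nat.card_congr
    apply Equiv.subtypeEquivRight
    intro v
    constructor
    · intro hG d
      exact hG (ι d)
    · intro hH d
      rcases hclass d with rfl | rfl | ⟨h, rfl⟩
      · intro e; exact hH s₁ (hs₁fst.trans e)
      · intro e; exact hH s₂ (hs₂fst.trans e)
      · exact hH h
  have hFaces : numFaces R + 1 ≤ numFaces R' := by
    unfold numFaces
    rw [← hφdef, ← hφ'def, hiso]
    omega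
  have hedge : Nat.card G.edgeSet = Nat.card H.edgeSet + 1 := by
    have hEH : H.edgeSet = G.edgeSet \ {s(u, w)} := by
      ext e
      induction e using Sym2.ind with
      | _ a b =>
        simp only [mem_edgeSet, Set.mem_diff, Set.mem_singleton_iff]
        constructor
        · intro h
          refine ⟨hle h, fun e' => ?_⟩
          rcases Sym2.eq_iff.mp e' with ⟨ha, hb⟩ | ⟨ha, hb⟩
          · subst ha; subst hb; exact hnadj h
          · subst ha; subst hb; exact hnadj h.symm
        · rintro ⟨hg, hne'⟩
          exact hrest a b hg hne'
    have h2 : (G.edgeSet \ {s(u, w)}).ncard + 1 = G.edgeSet.ncard :=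
      Set.ncard_diff_singleton_add_one ((G.mem_edgeSet).mpr huw) (Set.toFinite _)
    rw [Nat.card_coe_set_eq, Nat.card_coe_set_eq, hEH]
    exact h2.symm
  have hcomp : Nat.card G.ConnectedComponent ≤ Nat.card H.ConnectedComponent := by
    haveI : Finite H.ConnectedComponent :=
      Finite.of_surjective H.connectedComponentMk (fun c => c.exists_rep)
    apply Nat.card_le_card_of_surjective (ConnectedComponent.map (Hom.ofLE hle))
    intro c
    refine ConnectedComponent.ind (fun v => ?_) c
    exact ⟨H.connectedComponentMk v, ConnectedComponent.map_mk _ _⟩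
  refine ⟨R', ?_⟩
  show (Nat.card G.edgeSet : ℤ) + 2 * Nat.card G.ConnectedComponent
      - Nat.card V - numFaces R' ≤ (Nat.card H.edgeSet : ℤ) + 2 * Nat.card H.ConnectedComponent
      - Nat.card V - numFaces R
  have c1 : (Nat.card G.edgeSet : ℤ) = Nat.card H.edgeSet + 1 := by exact_mod_cast hedge
  have c2 : (Nat.card G.ConnectedComponent : ℤ) ≤ Nat.card H.ConnectedComponent := by
    exact_mod_cast hcomp
  have c3 : (numFaces R : ℤ) + 1 ≤ numFaces R' := by exact_mod_cast hFaces
  linarith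

end Aux

/-- a cubic graph which is irreducible for an orientable surface `S_k`
contains no triangle. -/
theorem irreducible_cubic_triangle_free {V : Type*} [Fintype V] (G : SimpleGraph V)
    (hcubic : ∀ v : V, Nat.card {w : V // G.Adj v w} = 3)
    (k : ℕ) (hirr : IrreducibleForSurface G k) :
    ∀ v₁ v₂ v₃ : V, ¬ (G.Adj v₁ v₂ ∧ G.Adj v₂ v₃ ∧ G.Adj v₁ v₃) := by
  classical
  rintro v₁ v₂ v₃ ⟨h12, h23, h13⟩
  have h12n : v₁ ≠ v₂ := h12.ne
  have h13n : v₁ ≠ v₃ := h13.ne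
  have h23n : v₂ ≠ v₃ := h23.ne
  set H : SimpleGraph V := G.deleteEdges {s(v₁, v₂)} with hH
  have hle : H ≤ G := G.deleteEdges_le _
  have hnadj : ¬ H.Adj v₁ v₂ := by
    rw [hH, deleteEdges_adj]
    rintro ⟨-, hs⟩
    exact hs rfl
  have hrest : ∀ a b : V, G.Adj a b → s(a, b) ≠ s(v₁, v₂) → H.Adj a b := by
    intro a b hab hs
    rw [hH, deleteEdges_adj]
    exact ⟨hab, hs⟩
  have hne : H ≠ G := fun h => hnadj (by rw [h]; exact h12)
  obtain ⟨R, hR⟩ := hirr.2 H hle hne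
  have hadjp : H.Adj v₃ v₁ := by
    refine hrest v₃ v₁ h13.symm (fun e => ?_)
    rcases Sym2.eq_iff.mp e with ⟨ha, _⟩ | ⟨ha, _⟩
    · exact h13n ha.symm
    · exact h23n ha.symm
  have hadjq : H.Adj v₃ v₂ := by
    refine hrest v₃ v₂ h23.symm (fun e => ?_)
    rcases Sym2.eq_iff.mp e with ⟨ha, _⟩ | ⟨ha, _⟩
    · exact h13n ha.symm
    · exact h23n ha.symm
  set p : H.Dart := ⟨(v₃, v₁), hadjp⟩ with hp
  set q : H.Dart := ⟨(v₃, v₂), hadjq⟩ with hq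
  have hpqne : p ≠ q := by
    intro e
    have h2 : ((v₃, v₁) : V × V) = (v₃, v₂) := congrArg Dart.toProd e
    exact h12n (congrArg Prod.snd h2)
  have hdich : R.rot p = q ∨ R.rot q = p := by
    by_contra hcon
    push_neg at hcon
    obtain ⟨hc1, hc2⟩ := hcon
    have hfix : ∀ d d' : H.Dart, d.fst = d'.fst → d ≠ d' → R.rot d ≠ d := by
      intro d d' hf hne' he
      exact hne' ((R.star_cyc d d' hf).eq_of_left he)
    have h1 : R.rot p ≠ p := hfix p q rfl hpqne
    have h2 : R.rot q ≠ q := hfix q p rfl (fun e => hpqne e.symm)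
    have hfp : (R.rot p).fst = v₃ := R.fst_rot p
    have hfq : (R.rot q).fst = v₃ := R.fst_rot q
    set x := (R.rot p).snd with hx
    set y := (R.rot q).snd with hy
    have hax : G.Adj v₃ x := by
      have h3 := hle (R.rot p).adj
      rwa [hfp] at h3
    have hay : G.Adj v₃ y := by
      have h3 := hle (R.rot q).adj
      rwa [hfq] at h3
    have hxv₁ : x ≠ v₁ := fun e => h1 (Dart.ext _ _ (Prod.ext hfp e))
    have hxv₂ : x ≠ v₂ := fun e => hc1 (Dart.ext _ _ (Prod.ext hfp e))
    have hyv₂ : y ≠ v₂ := fun e => h2 (Dart.ext _ _ (Prod.ext hfq e))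
    have hyv₁ : y ≠ v₁ := fun e => hc2 (Dart.ext _ _ (Prod.ext hfq e))
    have hxy : x ≠ y := by
      intro e
      exact hpqne (R.rot.injective (Dart.ext _ _ (Prod.ext (hfp.trans hfq.symm) e)))
    have hv₁x : v₁ ≠ x := fun e => hxv₁ e.symm
    have hv₁y : v₁ ≠ y := fun e => hyv₁ e.symm
    have hv₂x : v₂ ≠ x := fun e => hxv₂ e.symm
    have hv₂y : v₂ ≠ y := fun e => hyv₂ e.symm
    have hsub : ({v₁, v₂, x, y} : Set V) ⊆ {z | G.Adj v₃ z} := by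
      intro z hz
      rcases hz with rfl | rfl | rfl | rfl
      · exact h13.symm
      · exact h23.symm
      · exact hax
      · exact hay
    have h4 : ({v₁, v₂, x, y} : Set V).ncard = 4 := by
      rw [Set.ncard_insert_of_notMem
          (by simp [Set.mem_insert_iff, Set.mem_singleton_iff, h12n, hv₁x, hv₁y]),
        Set.ncard_insert_of_notMem
          (by simp [Set.mem_insert_iff, Set.mem_singleton_iff, hv₂x, hv₂y]),
        Set.ncard_insert_of_notMem (by simp [Set.mem_singleton_iff, hxy]),
        Set.ncard_singleton]
    have hle4 : ({v₁, v₂, x, y} : Set V).ncard ≤ ({z | G.Adj v₃ z}).ncard :=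
      Set.ncard_le_ncard hsub (Set.toFinite _)
    have hcard3 : ({z | G.Adj v₃ z}).ncard = 3 := by
      rw [← Nat.card_coe_set_eq]
      exact hcubic v₃
    rw [h4, hcard3] at hle4
    omega
  rcases hdich with hd | hd
  · obtain ⟨d₁, d₂, hsc, hd₁, hd₂⟩ := exists_darts R p q hd
    obtain ⟨R', hR'⟩ := splice hle h12 hnadj hrest R d₁ d₂ hsc hd₁ hd₂
    exact hirr.1 ⟨R', hR'.trans hR⟩
  · obtain ⟨d₁, d₂, hsc, hd₁, hd₂⟩ := exists_darts R q p hd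
    have hnadj2 : ¬ H.Adj v₂ v₁ := fun h => hnadj h.symm
    have hrest2 : ∀ a b : V, G.Adj a b → s(a, b) ≠ s(v₂, v₁) → H.Adj a b := by
      intro a b hab hs
      refine hrest a b hab (fun e => hs ?_)
      rw [e, Sym2.eq_swap]
    obtain ⟨R', hR'⟩ := splice hle h12.symm hnadj2 hrest2 R d₁ d₂ hsc hd₁ hd₂
    exact hirr.1 ⟨R', hR'.trans hR⟩
end
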